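/- arXiv:1712.05218 — 6 statements merged into one kernel-verified Lean document; each statement's English description precedes it below -/
import Mathlib

section
/- Let V be a finite set and τ : V → ℕ with τ(v) ≥ 1 for all v. If J : ℕ≥1 → Finset V is a feasible schedule for τ, then the schedule J' defined by J'(k) = J(2k−1) ∪ J(2k) for k ≥ 1 is a feasible schedule for the turnover times τ'(v) = ⌈τ(v)/2⌉. -/
/-- A schedule `J` (day `k ≥ 1` visits the set `J k`) is feasible for turnover times `τ`:
every client `v` is visited at least once in every window of `τ v` consecutive days. -/
def Feasible {V : Type*} (τ : V → ℕ) (J : ℕ → Finset V) : Prop :=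
  ∀ v : V, ∀ t : ℕ, ∃ k : ℕ, t < k ∧ k ≤ t + τ v ∧ v ∈ J k

/-- Concatenating days pairwise: if `J` is feasible for `τ`, then
`J' k = J (2k-1) ∪ J (2k)` is feasible for the turnover times `⌈τ v / 2⌉`. -/
theorem doubling_schedule_feasible {V : Type*} [Fintype V] [DecidableEq V]
    (τ : V → ℕ) (hτ : ∀ v, 1 ≤ τ v) (J : ℕ → Finset V) (hJ : Feasible τ J) :
    Feasible (fun v => (τ v + 1) / 2) (fun k => J (2 * k - 1) ∪ J (2 * k)) := by
  intro v t
  obtain ⟨m, hm1, hm2, hmJ⟩ := hJ v (2 * t)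
  refine ⟨(m + 1) / 2, by omega, ?_, ?_⟩
  · show (m + 1) / 2 ≤ t + (τ v + 1) / 2
    omega
  · show v ∈ J (2 * ((m + 1) / 2) - 1) ∪ J (2 * ((m + 1) / 2))
    simp only [Finset.mem_union]
    rcases Nat.even_or_odd m with ⟨j, hj⟩ | ⟨j, hj⟩
    · right
      have : 2 * ((m + 1) / 2) = m := by omega
      rw [this]; exact hmJ
    · left
      have : 2 * ((m + 1) / 2) - 1 = m := by omega
      rw [this]; exact hmJ
end

section
/- Let (X,d) be a metric space with depot s ∈ X, let V ⊆ X be a finite set of clients, and let τ : V → ℕ with τ(v) ≥ 1. Define τ'(v) = 2^⌊log₂ τ(v)⌋ (τ rounded down to a power of 2). Then the min-max value of the instance (V,τ') is at most 2 times the min-max value of the instance (V,τ). -/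
open scoped BigOperators

/-- A schedule on the client set `V` (day `k ≥ 1` visits `J k ⊆ V`) is feasible for
turnover times `τ`: every client `v ∈ V` is visited in every window of `τ v` days. -/
def FeasibleOn {X : Type*} (V : Finset X) (τ : X → ℕ) (J : ℕ → Finset X) : Prop :=
  (∀ k : ℕ, J k ⊆ V) ∧ ∀ v ∈ V, ∀ t : ℕ, ∃ k : ℕ, t < k ∧ k ≤ t + τ v ∧ v ∈ J k

/-- The cost of the route `s, v₁, …, v_r, s` where `l = [v₁, …, v_r]`. -/
def routeLen {X : Type*} (d : X → X → ℝ) (s : X) (l : List X) : ℝ :=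
  (List.zip (s :: l) (l ++ [s])).foldr (fun p acc => d p.1 p.2 + acc) 0

/-- The tour cost of a finite set `S`: the minimum over all orderings `v₁,…,v_r` of the
elements of `S` of `d s v₁ + ∑ d vᵢ vᵢ₊₁ + d v_r s`, with `c ∅ = 0`. -/
noncomputable def tourCost {X : Type*} [DecidableEq X] (d : X → X → ℝ) (s : X)
    (S : Finset X) : ℝ :=
  if S = ∅ then 0
  else sInf {x : ℝ | ∃ l : List X, l.Nodup ∧ l.toFinset = S ∧ x = routeLen d s l}

/-- The min-max value of the instance `(V, τ)` in a metric space with depot `s`: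
the infimum over feasible schedules `J` of `sup_k c(J k)` (expressed as the infimum
over all upper bounds on the daily tour costs of feasible schedules). -/
noncomputable def minMaxVal {X : Type*} [MetricSpace X] [DecidableEq X] (s : X)
    (V : Finset X) (τ : X → ℕ) : ℝ :=
  sInf {B : ℝ | ∃ J : ℕ → Finset X, FeasibleOn V τ J ∧
    ∀ k : ℕ, tourCost dist s (J k) ≤ B}

/-! ### Auxiliary lemmas -/

/-- Path length from `a` through `l` to `b`. -/
def len2 {X : Type*} (d : X → X → ℝ) (a b : X) : List X → ℝ
  | [] => d a b
  | x :: l => d a x + len2 d x b l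

lemma routeLen_eq_len2 {X : Type*} (d : X → X → ℝ) (s : X) (l : List X) :
    routeLen d s l = len2 d s s l := by
  suffices h : ∀ (l : List X) (a : X),
      (List.zip (a :: l) (l ++ [s])).foldr (fun p acc => d p.1 p.2 + acc) 0 = len2 d a s l by
    exact h l s
  intro l
  induction l with
  | nil => intro a; simp [len2]
  | cons x t ih => intro a; simp [routeLen, len2, ih x]

section Metric

variable {X : Type*} [MetricSpace X]

lemma len2_nonneg (a b : X) (l : List X) : 0 ≤ len2 dist a b l := by
  induction l generalizing a with
  | nil => exact dist_nonneg
  | cons x t ih => exact add_nonneg dist_nonneg (ih x)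

lemma routeLen_nonneg (s : X) (l : List X) : 0 ≤ routeLen dist s l := by
  rw [routeLen_eq_len2]; exact len2_nonneg s s l

lemma len2_cons_le (a b x : X) (l : List X) :
    len2 dist a b l ≤ dist a x + len2 dist x b l := by
  cases l with
  | nil => exact dist_triangle a x b
  | cons y t =>
    simp only [len2, ← add_assoc]
    exact add_le_add_left (dist_triangle a x y) _

lemma len2_sublist {l l' : List X} (h : List.Sublist l' l) (a b : X) :
    len2 dist a b l' ≤ len2 dist a b l := by
  induction h generalizing a with
  | slnil => exact le_refl _
  | cons x h ih =>
    calc len2 dist a b _ ≤ len2 dist a b _ := ih a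
    _ ≤ dist a x + len2 dist x b _ := len2_cons_le a b x _
    _ = len2 dist a b (x :: _) := rfl
  | cons_cons x h ih =>
    simpa [len2] using add_le_add_right (ih x) (dist a x)

lemma len2_split (d : X → X → ℝ) (a b x : X) (l₁ l₂ : List X) :
    len2 d a b (l₁ ++ x :: l₂) = len2 d a x l₁ + len2 d x b l₂ := by
  induction l₁ generalizing a with
  | nil => simp [len2]
  | cons y t ih => simp [len2, ih y, add_assoc]

lemma len2_end_le (a b c : X) (l : List X) :
    len2 dist a b l ≤ len2 dist a c l + dist c b := by
  induction l generalizing a with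
  | nil => exact dist_triangle a c b
  | cons x t ih => simpa [len2, add_assoc] using add_le_add_right (ih x) (dist a x)

lemma routeLen_append_le (s : X) (l₁ l₂ : List X) :
    routeLen dist s (l₁ ++ l₂) ≤ routeLen dist s l₁ + routeLen dist s l₂ := by
  rw [routeLen_eq_len2, routeLen_eq_len2, routeLen_eq_len2]
  cases l₂ with
  | nil => simp [len2]
  | cons x t =>
    rw [len2_split]
    have h := len2_end_le s x s l₁
    calc len2 dist s x l₁ + len2 dist x s t
        ≤ (len2 dist s s l₁ + dist s x) + len2 dist x s t := add_le_add_left h _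
      _ = len2 dist s s l₁ + len2 dist s s (x :: t) := by simp [len2]; ring

variable [DecidableEq X]

lemma tourCost_set_nonempty (s : X) (S : Finset X) :
    {x : ℝ | ∃ l : List X, l.Nodup ∧ l.toFinset = S ∧ x = routeLen dist s l}.Nonempty :=
  ⟨routeLen dist s S.toList, S.toList, S.nodup_toList, S.toList_toFinset, rfl⟩

lemma tourCost_set_bddBelow (s : X) (S : Finset X) :
    BddBelow {x : ℝ | ∃ l : List X, l.Nodup ∧ l.toFinset = S ∧ x = routeLen dist s l} := by
  refine ⟨0, fun x hx => ?_⟩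
  obtain ⟨l, -, -, rfl⟩ := hx
  exact routeLen_nonneg s l

lemma tourCost_nonneg (s : X) (S : Finset X) : 0 ≤ tourCost dist s S := by
  unfold tourCost
  split
  · exact le_refl _
  · exact le_csInf (tourCost_set_nonempty s S) fun x hx => by
      obtain ⟨l, -, -, rfl⟩ := hx; exact routeLen_nonneg s l

lemma tourCost_empty (s : X) : tourCost dist s (∅ : Finset X) = 0 := by
  simp [tourCost]

lemma tourCost_union_le (s : X) (A B : Finset X) :
    tourCost dist s (A ∪ B) ≤ tourCost dist s A + tourCost dist s B := by
  rcases eq_or_ne A ∅ with rfl | hA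
  · simpa [tourCost_empty] using le_refl (tourCost dist s B)
  rcases eq_or_ne B ∅ with rfl | hB
  · simpa [tourCost_empty] using le_refl (tourCost dist s A)
  have hAB : A ∪ B ≠ ∅ := by
    intro h
    exact hA (Finset.union_eq_empty.mp h).1
  -- key: for lists la, lb, there is a combined list
  have key : ∀ x ∈ {x : ℝ | ∃ l : List X, l.Nodup ∧ l.toFinset = A ∧ x = routeLen dist s l},
      ∀ y ∈ {x : ℝ | ∃ l : List X, l.Nodup ∧ l.toFinset = B ∧ x = routeLen dist s l},
      tourCost dist s (A ∪ B) ≤ x + y := by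
    rintro x ⟨la, hla, hlaA, rfl⟩ y ⟨lb, hlb, hlbB, rfl⟩
    set lc := la ++ lb.filter (fun v => v ∉ la) with hlc
    have hcnd : lc.Nodup := by
      refine List.Nodup.append hla (hlb.filter _) ?_
      intro v hv hv'
      have := List.of_mem_filter hv'
      simp at this
      exact this hv
    have hcfin : lc.toFinset = A ∪ B := by
      ext v
      simp only [hlc, List.toFinset_append, Finset.mem_union, List.mem_toFinset,
        List.mem_filter, ← hlaA, ← hlbB, List.mem_toFinset]
      by_cases hvla : v ∈ la <;> simp [hvla]
    have hlen : routeLen dist s lc ≤ routeLen dist s la + routeLen dist s lb := by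
      refine le_trans (routeLen_append_le s la _) (add_le_add_right ?_ _)
      rw [routeLen_eq_len2, routeLen_eq_len2]
      exact len2_sublist List.filter_sublist s s
    calc tourCost dist s (A ∪ B) ≤ routeLen dist s lc := by
          unfold tourCost
          rw [if_neg hAB]
          exact csInf_le (tourCost_set_bddBelow s _) ⟨lc, hcnd, hcfin, rfl⟩
      _ ≤ _ := hlen
  -- conclude
  have hAeq : tourCost dist s A =
      sInf {x : ℝ | ∃ l : List X, l.Nodup ∧ l.toFinset = A ∧ x = routeLen dist s l} := by
    simp [tourCost, hA]
  have hBeq : tourCost dist s B =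
      sInf {x : ℝ | ∃ l : List X, l.Nodup ∧ l.toFinset = B ∧ x = routeLen dist s l} := by
    simp [tourCost, hB]
  have h1 : ∀ y ∈ {x : ℝ | ∃ l : List X, l.Nodup ∧ l.toFinset = B ∧ x = routeLen dist s l},
      tourCost dist s (A ∪ B) - y ≤ tourCost dist s A := by
    intro y hy
    rw [hAeq]
    refine le_csInf (tourCost_set_nonempty s A) fun x hx => ?_
    have := key x hx y hy
    linarith
  have h2 : tourCost dist s (A ∪ B) - tourCost dist s A ≤ tourCost dist s B := by
    rw [hBeq]
    refine le_csInf (tourCost_set_nonempty s B) fun y hy => ?_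
    have := h1 y hy
    linarith
  linarith

end Metric

/-- Rounding the turnover times down to powers of 2 at most doubles the min-max value. -/
theorem minMax_rounding_powers_of_two {X : Type*} [MetricSpace X] [DecidableEq X]
    (s : X) (V : Finset X) (τ : X → ℕ) (hτ : ∀ v ∈ V, 1 ≤ τ v) :
    minMaxVal s V (fun v => 2 ^ Nat.log 2 (τ v)) ≤ 2 * minMaxVal s V τ := by
  set S := {B : ℝ | ∃ J : ℕ → Finset X, FeasibleOn V τ J ∧
    ∀ k : ℕ, tourCost dist s (J k) ≤ B} with hS
  set S' := {B : ℝ | ∃ J : ℕ → Finset X, FeasibleOn V (fun v => 2 ^ Nat.log 2 (τ v)) J ∧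
    ∀ k : ℕ, tourCost dist s (J k) ≤ B} with hS'
  have hSne : S.Nonempty := by
    refine ⟨tourCost dist s V, fun _ => V, ⟨fun k => le_refl _, ?_⟩, fun k => le_refl _⟩
    intro v hv t
    exact ⟨t + 1, Nat.lt_succ_self t, by have := hτ v hv; omega, hv⟩
  have hS'bdd : BddBelow S' := by
    refine ⟨0, fun B hB => ?_⟩
    obtain ⟨J, -, hJ⟩ := hB
    exact le_trans (tourCost_nonneg s (J 0)) (hJ 0)
  -- for every B ∈ S, 2B ∈ S'
  have key : ∀ B ∈ S, (2 : ℝ) * B ∈ S' := by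
    rintro B ⟨J, ⟨hJV, hJfeas⟩, hJB⟩
    refine ⟨fun k => J (2 * k - 1) ∪ J (2 * k), ⟨fun k => ?_, ?_⟩, fun k => ?_⟩
    · exact Finset.union_subset (hJV _) (hJV _)
    · intro v hv t
      obtain ⟨m, hm1, hm2, hmJ⟩ := hJfeas v hv (2 * t)
      have hτv : τ v < 2 ^ (Nat.log 2 (τ v) + 1) := Nat.lt_pow_succ_log_self (by norm_num) _
      refine ⟨(m + 1) / 2, by omega, ?_, ?_⟩
      · simp only
        rw [pow_succ] at hτv
        omega
      · have : m = 2 * ((m + 1) / 2) - 1 ∨ m = 2 * ((m + 1) / 2) := by omega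
        rcases this with h | h
        · exact Finset.mem_union_left _ (h ▸ hmJ)
        · exact Finset.mem_union_right _ (h ▸ hmJ)
    · calc tourCost dist s (J (2 * k - 1) ∪ J (2 * k))
          ≤ tourCost dist s (J (2 * k - 1)) + tourCost dist s (J (2 * k)) :=
            tourCost_union_le s _ _
        _ ≤ B + B := add_le_add (hJB _) (hJB _)
        _ = 2 * B := by ring
  have h1 : ∀ B ∈ S, sInf S' / 2 ≤ B := by
    intro B hB
    have := csInf_le hS'bdd (key B hB)
    linarith
  have h2 := le_csInf hSne h1
  show sInf S' ≤ 2 * sInf S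
  linarith
end

section
/- Let G be a finite tree with nonnegative edge weights, let s be a vertex of G, and let d_G be the induced shortest-path (weighted tree) metric on the vertices. Then for every finite set S of vertices of G, the tour cost c(S) with respect to d_G and depot s equals 2 times the total edge weight of the minimal subtree of G containing {s} ∪ S (the union of the paths in G from s to the vertices of S). -/
open scoped BigOperators
set_option linter.unusedSectionVars false

/-- The unique path between `u` and `v` in a tree, as a walk. -/
noncomputable def treePath {α : Type*} {G : SimpleGraph α} (hG : G.IsTree) (u v : α) :
    G.Walk u v :=
  (hG.existsUnique_path u v).exists.choose

/-- The weighted shortest-path (tree) metric: the total weight of the unique path. -/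
noncomputable def treeDist {α : Type*} {G : SimpleGraph α} (hG : G.IsTree)
    (w : Sym2 α → ℝ) (u v : α) : ℝ :=
  ((treePath hG u v).edges.map w).sum

namespace TreeTour

open SimpleGraph

variable {α : Type*} [DecidableEq α] {G : SimpleGraph α}

lemma treePath_isPath (hG : G.IsTree) (u v : α) : (treePath hG u v).IsPath :=
  (hG.existsUnique_path u v).exists.choose_spec

lemma eq_treePath (hG : G.IsTree) {u v : α} {p : G.Walk u v} (hp : p.IsPath) :
    p = treePath hG u v := by
  obtain ⟨q, _, hu⟩ := hG.existsUnique_path u v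
  rw [hu p hp, ← hu _ (treePath_isPath hG u v)]

attribute [irreducible] treePath

lemma treePath_self (hG : G.IsTree) (u : α) : treePath hG u u = SimpleGraph.Walk.nil :=
  (eq_treePath hG Walk.IsPath.nil).symm

lemma edges_nodup (hG : G.IsTree) (u v : α) : (treePath hG u v).edges.Nodup :=
  (treePath_isPath hG u v).isTrail.edges_nodup

/-- The "side" of a vertex `x` w.r.t. an edge `e`, relative to the depot `s`. -/
def side (hG : G.IsTree) (s : α) (e : Sym2 α) (x : α) : Prop :=
  e ∈ (treePath hG s x).edges

noncomputable instance (hG : G.IsTree) (s : α) (e : Sym2 α) (x : α) :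
    Decidable (side hG s e x) := by
  unfold side; infer_instance

lemma side_depot (hG : G.IsTree) (s : α) (e : Sym2 α) : ¬ side hG s e s := by
  unfold side
  rw [treePath_self]
  simp

lemma step_edges (hG : G.IsTree) (s : α) {u v : α} (h : G.Adj u v) :
    (treePath hG s v).edges = (treePath hG s u).edges ++ [s(u, v)] ∨
    (treePath hG s u).edges = (treePath hG s v).edges ++ [s(u, v)] := by
  by_cases hv : v ∈ (treePath hG s u).support
  · right
    have htp : ((treePath hG s u).takeUntil v hv).IsPath :=
      (treePath_isPath hG s u).takeUntil hv
    have hsplit : (treePath hG s u).support =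
        ((treePath hG s u).takeUntil v hv).support ++
          ((treePath hG s u).dropUntil v hv).support.tail := by
      rw [← Walk.support_append, Walk.take_spec]
    have hu_not : u ∉ ((treePath hG s u).takeUntil v hv).support := by
      intro hu
      have hnodup : (treePath hG s u).support.Nodup := (treePath_isPath hG s u).support_nodup
      rw [hsplit] at hnodup
      have hdisj := List.disjoint_of_nodup_append hnodup
      have hu2 : u ∈ ((treePath hG s u).dropUntil v hv).support := Walk.end_mem_support _
      rw [Walk.support_eq_cons] at hu2
      rcases List.mem_cons.1 hu2 with hu2 | hu2
      · exact h.ne hu2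
      · exact hdisj hu hu2
    have hq : (((treePath hG s u).takeUntil v hv).concat h.symm).IsPath := by
      rw [Walk.isPath_def, Walk.support_concat]
      simp only [List.concat_eq_append, List.nodup_append, List.nodup_cons, List.not_mem_nil,
        not_false_iff, List.nodup_nil, and_true, true_and]
      refine ⟨htp.support_nodup, ?_⟩
      intro a ha b hb
      simp only [List.mem_singleton] at hb
      subst hb
      rintro rfl
      exact hu_not ha
    have he : ((treePath hG s u).takeUntil v hv).concat h.symm = treePath hG s u :=
      eq_treePath hG hq
    have he2 : treePath hG s v = (treePath hG s u).takeUntil v hv := (eq_treePath hG htp).symm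
    have he3 := congrArg Walk.edges he
    rw [Walk.edges_concat] at he3
    rw [he2, ← he3, List.concat_eq_append, Sym2.eq_swap]
  · left
    have hq : ((treePath hG s u).concat h).IsPath := by
      rw [Walk.isPath_def, Walk.support_concat]
      simp only [List.concat_eq_append, List.nodup_append, List.nodup_cons, List.not_mem_nil,
        not_false_iff, List.nodup_nil, and_true, true_and]
      refine ⟨(treePath_isPath hG s u).support_nodup, ?_⟩
      intro a ha b hb
      simp only [List.mem_singleton] at hb
      subst hb
      rintro rfl
      exact hv ha
    have he3 := congrArg Walk.edges (eq_treePath hG hq)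
    rw [Walk.edges_concat] at he3
    rw [← he3, List.concat_eq_append]

lemma side_step (hG : G.IsTree) (s : α) {u v : α} (h : G.Adj u v) (e : Sym2 α) :
    (¬ (side hG s e u ↔ side hG s e v)) ↔ e = s(u, v) := by
  unfold side
  rcases step_edges hG s h with heq | heq
  · have hnd := edges_nodup hG s v
    rw [heq] at hnd
    have hf : s(u,v) ∉ (treePath hG s u).edges := by
      rw [List.nodup_append] at hnd
      intro hc
      exact hnd.2.2 _ hc _ (by simp) rfl
    rw [heq]
    by_cases hfe : e = s(u, v) <;> simp_all
  · have hnd := edges_nodup hG s u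
    rw [heq] at hnd
    have hf : s(u,v) ∉ (treePath hG s v).edges := by
      rw [List.nodup_append] at hnd
      intro hc
      exact hnd.2.2 _ hc _ (by simp) rfl
    rw [heq]
    by_cases hfe : e = s(u, v) <;> simp_all

lemma mem_edges_iff_side (hG : G.IsTree) (s : α) {x y : α} (e : Sym2 α) :
    e ∈ (treePath hG x y).edges ↔ ¬ (side hG s e x ↔ side hG s e y) := by
  have H : ∀ {x y : α} (p : G.Walk x y), p.IsPath →
      (e ∈ p.edges ↔ ¬ (side hG s e x ↔ side hG s e y)) := by
    intro x y p hp
    induction p with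
    | nil => simp
    | @cons x x' y h q ih =>
      have hq : q.IsPath := hp.of_cons
      have hnd : (Walk.cons h q).edges.Nodup := hp.isTrail.edges_nodup
      rw [Walk.edges_cons, List.nodup_cons] at hnd
      have hne : e = s(x, x') → e ∉ q.edges := by rintro rfl; exact hnd.1
      have h1 := side_step hG s h e
      have h2 := ih hq
      rw [Walk.edges_cons, List.mem_cons]
      tauto
  exact H _ (treePath_isPath hG x y)


/-! ### Sums over chains -/

/-- The length of a chain of vertices. -/
noncomputable def chainSum (d : α → α → ℝ) : List α → ℝ
  | a :: b :: r => d a b + chainSum d (b :: r)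
  | _ => 0

/-- The number of sign changes of `φ` along a chain. -/
def crossCount (φ : α → Prop) [DecidablePred φ] : List α → ℕ
  | a :: b :: r => (if φ a ↔ φ b then 0 else 1) + crossCount φ (b :: r)
  | _ => 0

lemma chainSum_cons (d : α → α → ℝ) (a : α) {M : List α} (hM : M ≠ []) :
    chainSum d (a :: M) = d a (M.head hM) + chainSum d M := by
  cases M with
  | nil => exact absurd rfl hM
  | cons b r => simp [chainSum]

lemma crossCount_cons (φ : α → Prop) [DecidablePred φ] (a : α) {M : List α} (hM : M ≠ []) :
    crossCount φ (a :: M) = (if φ a ↔ φ (M.head hM) then 0 else 1) + crossCount φ M := by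
  cases M with
  | nil => exact absurd rfl hM
  | cons b r => simp [crossCount]; split_ifs with hc <;> simp [hc]

lemma routeLen_eq_chainSum (d : α → α → ℝ) (s : α) (l : List α) :
    routeLen d s l = chainSum d (s :: (l ++ [s])) := by
  have H : ∀ (l : List α) (a : α),
      ((a :: l).zip (l ++ [s])).foldr (fun p acc => d p.1 p.2 + acc) 0 =
        chainSum d (a :: (l ++ [s])) := by
    intro l
    induction l with
    | nil => intro a; simp [chainSum]
    | cons x xs ih =>
      intro a
      simp only [List.cons_append, List.zip_cons_cons, List.foldr_cons]
      rw [ih x]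
      simp [chainSum]
  exact H l s

lemma chainSum_append (d : α → α → ℝ) {xs ys : List α} (hxs : xs ≠ []) (hys : ys ≠ []) :
    chainSum d (xs ++ ys) =
      chainSum d xs + d (xs.getLast hxs) (ys.head hys) + chainSum d ys := by
  induction xs with
  | nil => exact absurd rfl hxs
  | cons a as ih =>
    cases as with
    | nil =>
      simp only [List.nil_append, List.getLast_singleton]
      rw [List.singleton_append, chainSum_cons d a hys]
      simp [chainSum]
    | cons a' as' =>
      have h1 : (a :: a' :: as') ++ ys = a :: ((a' :: as') ++ ys) := by simp
      rw [h1, chainSum_cons d a (by simp), chainSum_cons d a (List.cons_ne_nil _ _)]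
      have hhead : (((a' :: as') ++ ys).head (by simp)) = a' := by simp
      rw [hhead, ih (List.cons_ne_nil _ _)]
      have : (a :: a' :: as').getLast hxs = (a' :: as').getLast (List.cons_ne_nil _ _) :=
        List.getLast_cons _
      rw [this]
      simp [chainSum]
      ring

lemma treeDist_eq_sum (hG : G.IsTree) (w : Sym2 α → ℝ) (x y : α) :
    treeDist hG w x y = ∑ e ∈ (treePath hG x y).edges.toFinset, w e := by
  unfold treeDist
  rw [List.sum_toFinset _ (edges_nodup hG x y)]

section FintypeSums

variable [Fintype α]

lemma treeDist_eq_sum_univ (hG : G.IsTree) (w : Sym2 α → ℝ) (x y : α) :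
    treeDist hG w x y = ∑ e : Sym2 α, if e ∈ (treePath hG x y).edges then w e else 0 := by
  rw [treeDist_eq_sum]
  simp only [← List.mem_toFinset]
  rw [Finset.sum_ite_mem, Finset.univ_inter]

lemma chainSum_treeDist (hG : G.IsTree) (w : Sym2 α → ℝ) (s : α) (C : List α) :
    chainSum (treeDist hG w) C =
      ∑ e : Sym2 α, (crossCount (side hG s e) C : ℝ) * w e := by
  induction C with
  | nil => simp [chainSum, crossCount]
  | cons a l ih =>
    cases l with
    | nil => simp [chainSum, crossCount]
    | cons b r =>
      have h1 : chainSum (treeDist hG w) (a :: b :: r) =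
          treeDist hG w a b + chainSum (treeDist hG w) (b :: r) := by simp [chainSum]
      have h2 : ∀ e : Sym2 α, crossCount (side hG s e) (a :: b :: r) =
          (if side hG s e a ↔ side hG s e b then 0 else 1) + crossCount (side hG s e) (b :: r) :=
        fun e => by simp [crossCount]
      rw [h1, ih]
      have h3 : ∀ e : Sym2 α,
          (crossCount (side hG s e) (a :: b :: r) : ℝ) * w e =
          (if e ∈ (treePath hG a b).edges then w e else 0) +
            (crossCount (side hG s e) (b :: r) : ℝ) * w e := by
        intro e
        rw [h2 e]
        push_cast
        rw [add_mul]
        congr 1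
        by_cases hab : side hG s e a ↔ side hG s e b
        · rw [if_pos hab, if_neg (by rw [mem_edges_iff_side hG s]; tauto)]
          simp
        · rw [if_neg hab, if_pos (by rw [mem_edges_iff_side hG s]; tauto)]
          simp
      rw [Finset.sum_congr rfl (fun e _ => h3 e), Finset.sum_add_distrib]
      rw [treeDist_eq_sum_univ hG w a b]

end FintypeSums

lemma crossCount_even_iff (φ : α → Prop) [DecidablePred φ] :
    ∀ (l : List α) (a : α),
      Even (crossCount φ (a :: l)) ↔ (φ a ↔ φ ((a :: l).getLast (List.cons_ne_nil _ _))) := by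
  intro l
  induction l with
  | nil => intro a; simp [crossCount]
  | cons b r ih =>
    intro a
    have hL : (a :: b :: r).getLast (List.cons_ne_nil _ _) =
        (b :: r).getLast (List.cons_ne_nil _ _) := List.getLast_cons _
    rw [hL]
    have h1 : crossCount φ (a :: b :: r) =
        (if φ a ↔ φ b then 0 else 1) + crossCount φ (b :: r) := by simp [crossCount]
    rw [h1]
    by_cases hab : φ a ↔ φ b
    · rw [if_pos hab, zero_add, ih b]
      constructor
      · intro h; tauto
      · intro h; tauto
    · rw [if_neg hab]
      rw [add_comm, Nat.even_add_one, ih b]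
      constructor
      · intro h; tauto
      · intro h; tauto

lemma crossCount_pos (φ : α → Prop) [DecidablePred φ] :
    ∀ (l : List α) (a : α) (x : α), x ∈ a :: l → ¬ (φ x ↔ φ a) →
      1 ≤ crossCount φ (a :: l) := by
  intro l
  induction l with
  | nil =>
    intro a x hx hne
    rcases List.mem_singleton.1 hx with rfl
    exact absurd Iff.rfl hne
  | cons b r ih =>
    intro a x hx hne
    have h1 : crossCount φ (a :: b :: r) =
        (if φ a ↔ φ b then 0 else 1) + crossCount φ (b :: r) := by simp [crossCount]
    by_cases hab : φ a ↔ φ b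
    · rcases List.mem_cons.1 hx with rfl | hx
      · exact absurd Iff.rfl hne
      · have := ih b x hx (by tauto)
        omega
    · rw [h1, if_neg hab]
      omega

lemma crossCount_zero (φ : α → Prop) [DecidablePred φ] (hφ : ∀ x, ¬ φ x) :
    ∀ (l : List α), crossCount φ l = 0 := by
  intro l
  induction l with
  | nil => simp [crossCount]
  | cons a l ih =>
    cases l with
    | nil => simp [crossCount]
    | cons b r =>
      have h1 : crossCount φ (a :: b :: r) =
          (if φ a ↔ φ b then 0 else 1) + crossCount φ (b :: r) := by simp [crossCount]
      rw [h1, if_pos (by constructor <;> intro h <;> exact absurd h (hφ _)), ih]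

lemma exists_split (φ : α → Prop) (s : α) :
    ∀ (l : List α) (a : α) (x : α), x ∈ l → ¬ (φ x ↔ φ a) →
      ∃ l1 l2, l = l1 ++ l2 ∧
        ¬ (φ ((a :: l1).getLast (List.cons_ne_nil _ _)) ↔ φ (l2.headD s)) := by
  intro l
  induction l with
  | nil => intro a x hx; exact absurd hx List.not_mem_nil
  | cons c cs ih =>
    intro a x hx hne
    by_cases hca : φ c ↔ φ a
    · rcases List.mem_cons.1 hx with rfl | hx
      · exact absurd hca hne
      · obtain ⟨m1, m2, hsplit, hm⟩ := ih c x hx (by tauto)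
        refine ⟨c :: m1, m2, by simp [hsplit], ?_⟩
        rwa [List.getLast_cons (List.cons_ne_nil _ _)]
    · refine ⟨[], c :: cs, rfl, ?_⟩
      simp only [List.getLast_singleton, List.headD_cons]
      tauto

section Main

variable [Fintype α]

lemma lower_bound (hG : G.IsTree) (w : Sym2 α → ℝ) (hw : ∀ e ∈ G.edgeSet, 0 ≤ w e)
    (s : α) (S : Finset α) (l : List α) (hfs : l.toFinset = S) :
    2 * ∑ e ∈ S.biUnion (fun v => (treePath hG s v).edges.toFinset), w e ≤
      routeLen (treeDist hG w) s l := by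
  rw [routeLen_eq_chainSum, chainSum_treeDist hG w s]
  set U := S.biUnion (fun v => (treePath hG s v).edges.toFinset) with hU
  have hL : 2 * ∑ e ∈ U, w e = ∑ e : Sym2 α, if e ∈ U then 2 * w e else 0 := by
    rw [Finset.sum_ite_mem, Finset.univ_inter, Finset.mul_sum]
  rw [hL]
  apply Finset.sum_le_sum
  intro e _
  by_cases heU : e ∈ U
  · rw [if_pos heU]
    obtain ⟨x, hxS, hex⟩ := Finset.mem_biUnion.1 heU
    rw [List.mem_toFinset] at hex
    have hwe : 0 ≤ w e := hw e ((treePath hG s x).edges_subset_edgeSet hex)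
    have hlast : (s :: (l ++ [s])).getLast (List.cons_ne_nil _ _) = s := by
      rw [List.getLast_cons (by simp)]
      exact List.getLast_concat
    have heven : Even (crossCount (side hG s e) (s :: (l ++ [s]))) := by
      rw [crossCount_even_iff, hlast]
    have hpos : 1 ≤ crossCount (side hG s e) (s :: (l ++ [s])) := by
      refine crossCount_pos (side hG s e) (l ++ [s]) s x ?_ ?_
      · simp only [List.mem_cons, List.mem_append]
        right; left; rw [← List.mem_toFinset, hfs]; exact hxS
      · exact fun hiff => side_depot hG s e (hiff.1 hex)
    have h2 : (2 : ℝ) ≤ (crossCount (side hG s e) (s :: (l ++ [s])) : ℝ) := by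
      obtain ⟨k, hk⟩ := heven
      have : 2 ≤ crossCount (side hG s e) (s :: (l ++ [s])) := by omega
      exact_mod_cast this
    exact mul_le_mul_of_nonneg_right h2 hwe
  · rw [if_neg heU]
    by_cases heE : e ∈ G.edgeSet
    · exact mul_nonneg (Nat.cast_nonneg _) (hw e heE)
    · have hz : crossCount (side hG s e) (s :: (l ++ [s])) = 0 :=
        crossCount_zero _ (fun x hx => heE ((treePath hG s x).edges_subset_edgeSet hx)) _
      rw [hz]
      simp

end Main

lemma edges_subset_of_mem_support (hG : G.IsTree) {s x y : α}
    (hy : y ∈ (treePath hG s x).support) :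
    (treePath hG s y).edges ⊆ (treePath hG s x).edges := by
  have h1 : ((treePath hG s x).takeUntil y hy).IsPath := (treePath_isPath hG s x).takeUntil hy
  rw [← eq_treePath hG h1]
  exact Walk.edges_takeUntil_subset _ hy

lemma edges_disjoint_of_between (hG : G.IsTree) {u u' b : α}
    (hb : b ∈ (treePath hG u u').support) (e : Sym2 α) :
    ¬ (e ∈ (treePath hG u b).edges ∧ e ∈ (treePath hG b u').edges) := by
  rintro ⟨h1, h2⟩
  have ht : treePath hG u b = (treePath hG u u').takeUntil b hb :=
    (eq_treePath hG ((treePath_isPath hG u u').takeUntil hb)).symm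
  have hd : treePath hG b u' = (treePath hG u u').dropUntil b hb :=
    (eq_treePath hG ((treePath_isPath hG u u').dropUntil hb)).symm
  have hsplit : (treePath hG u u').edges =
      ((treePath hG u u').takeUntil b hb).edges ++
        ((treePath hG u u').dropUntil b hb).edges := by
    rw [← Walk.edges_append, Walk.take_spec]
  have hnd := edges_nodup hG u u'
  rw [hsplit] at hnd
  rw [ht] at h1
  rw [hd] at h2
  exact (List.disjoint_of_nodup_append hnd) h1 h2

section Insertion

variable [Fintype α]

lemma insertion_cost (hG : G.IsTree) (w : Sym2 α → ℝ) (s : α) {u u' v b : α}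
    {U' : Finset (Sym2 α)}
    (hb : b ∈ (treePath hG u u').support)
    (hu : ∀ e, side hG s e u → e ∈ U')
    (hu' : ∀ e, side hG s e u' → e ∈ U')
    (hEb : ∀ e, side hG s e b → e ∈ U')
    (hbr : ∀ e ∈ (treePath hG b v).edges, e ∉ U') :
    treeDist hG w u v + treeDist hG w v u' - treeDist hG w u u' = 2 * treeDist hG w b v := by
  rw [treeDist_eq_sum_univ hG w u v, treeDist_eq_sum_univ hG w v u',
    treeDist_eq_sum_univ hG w u u', treeDist_eq_sum_univ hG w b v,
    ← Finset.sum_add_distrib, ← Finset.sum_sub_distrib, Finset.mul_sum]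
  refine Finset.sum_congr rfl fun e _ => ?_
  have hdisj := edges_disjoint_of_between hG hb e
  rw [mem_edges_iff_side hG s (x := u) (y := b),
    mem_edges_iff_side hG s (x := b) (y := u')] at hdisj
  by_cases hBV : side hG s e b ↔ side hG s e v
  · rw [if_neg (fun hc => ((mem_edges_iff_side hG s e).1 hc) hBV), mul_zero]
    have c1 := mem_edges_iff_side hG s (x := u) (y := v) e
    have c2 := mem_edges_iff_side hG s (x := v) (y := u') e
    have c3 := mem_edges_iff_side hG s (x := u) (y := u') e
    by_cases hA : side hG s e u <;> by_cases hV : side hG s e v <;>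
        by_cases hB : side hG s e u'
    · simp only [c1, c2, c3]; simp [hA, hV, hB]
    · simp only [c1, c2, c3]; simp [hA, hV, hB]
    · have hBb : ¬ side hG s e b := fun h => hV (hBV.mp h)
      exact absurd ⟨fun hiff => hBb (hiff.mp hA), fun hiff => hBb (hiff.mpr hB)⟩ hdisj
    · simp only [c1, c2, c3]; simp [hA, hV, hB]
    · simp only [c1, c2, c3]; simp [hA, hV, hB]
    · have hBb : side hG s e b := hBV.mpr hV
      exact absurd ⟨fun hiff => hA (hiff.mpr hBb), fun hiff => hB (hiff.mp hBb)⟩ hdisj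
    · simp only [c1, c2, c3]; simp [hA, hV, hB]
    · simp only [c1, c2, c3]; simp [hA, hV, hB]
  · have hmem : e ∈ (treePath hG b v).edges := (mem_edges_iff_side hG s e).2 hBV
    have hne : e ∉ U' := hbr e hmem
    have hA : ¬ side hG s e u := fun h => hne (hu e h)
    have hB : ¬ side hG s e u' := fun h => hne (hu' e h)
    have hBb : ¬ side hG s e b := fun h => hne (hEb e h)
    have hV : side hG s e v := by tauto
    rw [if_pos (by rw [mem_edges_iff_side hG s]; tauto),
      if_pos (by rw [mem_edges_iff_side hG s]; tauto),
      if_neg (by rw [mem_edges_iff_side hG s]; tauto),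
      if_pos hmem]
    ring

end Insertion

section Existence

variable [Fintype α]

lemma exists_good_route (hG : G.IsTree) (w : Sym2 α → ℝ) (s : α) (S : Finset α) :
    ∃ l : List α, l.Nodup ∧ l.toFinset = S ∧
      routeLen (treeDist hG w) s l =
        2 * ∑ e ∈ S.biUnion (fun v => (treePath hG s v).edges.toFinset), w e := by
  induction S using Finset.strongInduction with
  | _ S ih =>
  rcases S.eq_empty_or_nonempty with rfl | ⟨v, hv⟩
  · refine ⟨[], List.nodup_nil, by simp, ?_⟩
    rw [routeLen_eq_chainSum]
    simp only [List.nil_append]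
    have : chainSum (treeDist hG w) [s, s] = treeDist hG w s s + chainSum (treeDist hG w) [s] := by
      simp [chainSum]
    rw [this]
    simp [chainSum, treeDist, treePath_self]
  · obtain ⟨l', hnd', hfs', hlen'⟩ := ih (S.erase v) (Finset.erase_ssubset hv)
    set U' := (S.erase v).biUnion (fun x => (treePath hG s x).edges.toFinset) with hU'def
    obtain ⟨b, hfind⟩ : ∃ b, ((treePath hG s v).support.reverse.find?
        (fun y => decide ((treePath hG s y).edges.toFinset ⊆ U'))) = some b := by
      rw [← Option.isSome_iff_exists, List.find?_isSome]
      refine ⟨s, ?_, ?_⟩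
      · rw [List.mem_reverse]; exact Walk.start_mem_support _
      · simp [treePath_self]
    have hb_sup : b ∈ (treePath hG s v).support := by
      have := List.mem_of_find?_eq_some hfind
      rwa [List.mem_reverse] at this
    have hQb : (treePath hG s b).edges.toFinset ⊆ U' := by
      have := List.find?_some hfind
      simpa using this
    have hsupp : (treePath hG s v).support =
        ((treePath hG s v).takeUntil b hb_sup).support ++
          ((treePath hG s v).dropUntil b hb_sup).support.tail := by
      rw [← Walk.support_append, Walk.take_spec]
    have hb_not_tail : b ∉ ((treePath hG s v).dropUntil b hb_sup).support.tail := by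
      have hnd := (treePath_isPath hG s v).support_nodup
      rw [hsupp] at hnd
      exact fun hcon => (List.disjoint_of_nodup_append hnd)
        (Walk.end_mem_support ((treePath hG s v).takeUntil b hb_sup)) hcon
    have htail_fail : ∀ y ∈ ((treePath hG s v).dropUntil b hb_sup).support.tail,
        ¬ ((treePath hG s y).edges.toFinset ⊆ U') := by
      intro y hy hQy
      have hrs : (treePath hG s v).support.reverse =
          ((treePath hG s v).dropUntil b hb_sup).support.tail.reverse ++
            ((treePath hG s v).takeUntil b hb_sup).support.reverse := by
        rw [hsupp, List.reverse_append]
      rw [hrs, List.find?_append] at hfind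
      cases hfx : (((treePath hG s v).dropUntil b hb_sup).support.tail.reverse.find?
          (fun y => decide ((treePath hG s y).edges.toFinset ⊆ U'))) with
      | some z =>
        rw [hfx] at hfind
        have hzb : z = b := by simpa using hfind
        have hz := List.mem_of_find?_eq_some hfx
        rw [List.mem_reverse] at hz
        exact hb_not_tail (hzb ▸ hz)
      | none =>
        have := List.find?_eq_none.1 hfx y (by rwa [List.mem_reverse])
        simp only [decide_eq_true_eq] at this
        exact this hQy
    have hbranch : ∀ e ∈ ((treePath hG s v).dropUntil b hb_sup).edges, e ∉ U' := by
      intro e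
      induction e using Sym2.ind with
      | _ y1 y2 =>
      intro he hU
      obtain ⟨x, hxS, hex⟩ := Finset.mem_biUnion.1 hU
      rw [List.mem_toFinset] at hex
      have hy1d : y1 ∈ ((treePath hG s v).dropUntil b hb_sup).support :=
        Walk.fst_mem_support_of_mem_edges _ he
      have hy2d : y2 ∈ ((treePath hG s v).dropUntil b hb_sup).support :=
        Walk.snd_mem_support_of_mem_edges _ he
      have hy1x : y1 ∈ (treePath hG s x).support := Walk.fst_mem_support_of_mem_edges _ hex
      have hy2x : y2 ∈ (treePath hG s x).support := Walk.snd_mem_support_of_mem_edges _ hex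
      have hne12 : y1 ≠ y2 := by
        have hmem : s(y1, y2) ∈ G.edgeSet := Walk.edges_subset_edgeSet _ he
        rw [SimpleGraph.mem_edgeSet] at hmem
        exact hmem.ne
      have hhead := Walk.support_eq_cons ((treePath hG s v).dropUntil b hb_sup)
      have hyt : ∃ y, y ∈ ((treePath hG s v).dropUntil b hb_sup).support.tail ∧
          y ∈ (treePath hG s x).support := by
        by_cases h1 : y1 = b
        · refine ⟨y2, ?_, hy2x⟩
          have h2 : y2 ≠ b := fun hc => hne12 (by rw [h1, hc])
          rw [hhead] at hy2d
          rcases List.mem_cons.1 hy2d with hc | hc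
          · exact absurd hc h2
          · exact hc
        · refine ⟨y1, ?_, hy1x⟩
          rw [hhead] at hy1d
          rcases List.mem_cons.1 hy1d with hc | hc
          · exact absurd hc h1
          · exact hc
      obtain ⟨y, hyt1, hyx⟩ := hyt
      refine htail_fail y hyt1 ?_
      intro f hf
      rw [List.mem_toFinset] at hf
      have hfx : f ∈ (treePath hG s x).edges := edges_subset_of_mem_support hG hyx hf
      exact Finset.mem_biUnion.2 ⟨x, hxS, List.mem_toFinset.2 hfx⟩
    have htb : treePath hG s b = (treePath hG s v).takeUntil b hb_sup :=
      (eq_treePath hG ((treePath_isPath hG s v).takeUntil hb_sup)).symm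
    have hbv : treePath hG b v = (treePath hG s v).dropUntil b hb_sup :=
      (eq_treePath hG ((treePath_isPath hG s v).dropUntil hb_sup)).symm
    have hsplitE : (treePath hG s v).edges =
        (treePath hG s b).edges ++ (treePath hG b v).edges := by
      rw [htb, hbv, ← Walk.edges_append, Walk.take_spec]
    have hsplit_route : ∃ l1 l2 : List α, l' = l1 ++ l2 ∧
        b ∈ (treePath hG ((s :: l1).getLast (List.cons_ne_nil _ _)) (l2.headD s)).support := by
      by_cases hbs : b = s
      · refine ⟨[], l', rfl, ?_⟩
        subst hbs
        simpa using Walk.start_mem_support (treePath hG b (l'.headD b))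
      · have hnotnil : ¬ ((treePath hG s b).reverse.Nil) :=
          Walk.not_nil_of_ne hbs
        obtain ⟨y, hadj, q, hq⟩ := Walk.not_nil_iff.1 hnotnil
        have hf_mem : s(b, y) ∈ (treePath hG s b).edges := by
          have h0 : s(b, y) ∈ (treePath hG s b).reverse.edges := by rw [hq]; simp
          rwa [Walk.edges_reverse, List.mem_reverse] at h0
        have hfU : s(b, y) ∈ U' := hQb (List.mem_toFinset.2 hf_mem)
        obtain ⟨x, hxS', hfx⟩ := Finset.mem_biUnion.1 hfU
        rw [List.mem_toFinset] at hfx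
        have hxl : x ∈ l' := by rw [← List.mem_toFinset, hfs']; exact hxS'
        have hnex : ¬ (side hG s (s(b, y)) x ↔ side hG s (s(b, y)) s) :=
          fun hiff => side_depot hG s _ (hiff.1 hfx)
        obtain ⟨l1, l2, h12, hmm⟩ := exists_split (side hG s (s(b, y))) s l' s x hxl hnex
        refine ⟨l1, l2, h12, ?_⟩
        have hfe : s(b, y) ∈
            (treePath hG ((s :: l1).getLast (List.cons_ne_nil _ _)) (l2.headD s)).edges := by
          rw [mem_edges_iff_side hG s]
          exact hmm
        exact Walk.fst_mem_support_of_mem_edges _ hfe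
    obtain ⟨l1, l2, h12, hbmem⟩ := hsplit_route
    have hvl' : v ∉ l' := by
      rw [← List.mem_toFinset, hfs']
      exact Finset.notMem_erase v S
    have hu_side : ∀ e, side hG s e ((s :: l1).getLast (List.cons_ne_nil _ _)) → e ∈ U' := by
      intro e he
      rcases List.mem_cons.1 (List.getLast_mem (List.cons_ne_nil s l1)) with hc | hc
      · rw [hc] at he
        exact absurd he (side_depot hG s e)
      · have hx : (s :: l1).getLast (List.cons_ne_nil s l1) ∈ S.erase v := by
          rw [← hfs', List.mem_toFinset, h12]
          exact List.mem_append_left _ hc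
        exact Finset.mem_biUnion.2 ⟨_, hx, List.mem_toFinset.2 he⟩
    have hu'_side : ∀ e, side hG s e (l2.headD s) → e ∈ U' := by
      intro e he
      cases hl2 : l2 with
      | nil =>
        rw [hl2] at he
        exact absurd he (side_depot hG s e)
      | cons c cs =>
        rw [hl2] at he
        simp only [List.headD_cons] at he
        have hx : c ∈ S.erase v := by
          rw [← hfs', List.mem_toFinset, h12, hl2]
          exact List.mem_append_right _ List.mem_cons_self
        exact Finset.mem_biUnion.2 ⟨_, hx, List.mem_toFinset.2 he⟩
    have hEb_side : ∀ e, side hG s e b → e ∈ U' := fun e he => hQb (List.mem_toFinset.2 he)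
    have hbr_side : ∀ e ∈ (treePath hG b v).edges, e ∉ U' := by
      intro e he
      exact hbranch e (hbv ▸ he)
    have hkey := insertion_cost hG w s hbmem hu_side hu'_side hEb_side hbr_side
    have hvl1 : v ∉ l1 := fun hc => hvl' (h12 ▸ List.mem_append_left _ hc)
    have hvl2 : v ∉ l2 := fun hc => hvl' (h12 ▸ List.mem_append_right _ hc)
    refine ⟨l1 ++ v :: l2, ?_, ?_, ?_⟩
    · have h1 : (l1 ++ l2).Nodup := h12 ▸ hnd'
      rw [List.nodup_append] at h1
      rw [List.nodup_append, List.nodup_cons]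
      refine ⟨h1.1, ⟨hvl2, h1.2.1⟩, ?_⟩
      intro a ha b2 hb2
      rcases List.mem_cons.1 hb2 with rfl | hb2
      · exact fun h => hvl1 (h ▸ ha)
      · exact h1.2.2 a ha b2 hb2
    · have hins : (l1 ++ v :: l2).toFinset = insert v (l1 ++ l2).toFinset := by
        ext a
        simp only [List.mem_toFinset, List.mem_append, List.mem_cons, Finset.mem_insert]
        tauto
      rw [hins, ← h12, hfs', Finset.insert_erase hv]
    · have hC1 : s :: (l' ++ [s]) = (s :: l1) ++ (l2 ++ [s]) := by simp [h12]
      have hC2 : s :: ((l1 ++ v :: l2) ++ [s]) = (s :: l1) ++ (v :: (l2 ++ [s])) := by simp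
      have hhead1 : (l2 ++ [s]).head (by simp) = l2.headD s := by cases l2 <;> simp
      have e1 : chainSum (treeDist hG w) ((s :: l1) ++ (l2 ++ [s])) =
          chainSum (treeDist hG w) (s :: l1) +
            treeDist hG w ((s :: l1).getLast (List.cons_ne_nil _ _)) (l2.headD s) +
            chainSum (treeDist hG w) (l2 ++ [s]) := by
        rw [chainSum_append _ (List.cons_ne_nil _ _) (by simp), hhead1]
      have e2 : chainSum (treeDist hG w) ((s :: l1) ++ (v :: (l2 ++ [s]))) =
          chainSum (treeDist hG w) (s :: l1) +
            treeDist hG w ((s :: l1).getLast (List.cons_ne_nil _ _)) v +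
            (treeDist hG w v (l2.headD s) + chainSum (treeDist hG w) (l2 ++ [s])) := by
        rw [chainSum_append _ (List.cons_ne_nil _ _) (List.cons_ne_nil _ _),
          chainSum_cons _ _ (by simp : l2 ++ [s] ≠ [])]
        simp only [List.head_cons]
        rw [hhead1]
      have hnewF : (treePath hG b v).edges.toFinset =
          (treePath hG s v).edges.toFinset \ U' := by
        ext e
        simp only [Finset.mem_sdiff, List.mem_toFinset]
        constructor
        · intro he
          exact ⟨by rw [hsplitE]; exact List.mem_append_right _ he, hbr_side e he⟩
        · rintro ⟨he, hne⟩
          rw [hsplitE] at he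
          rcases List.mem_append.1 he with hL | hR
          · exact absurd (hQb (List.mem_toFinset.2 hL)) hne
          · exact hR
      have hdistbv : treeDist hG w b v = ∑ e ∈ (treePath hG s v).edges.toFinset \ U', w e := by
        rw [treeDist_eq_sum, hnewF]
      have hUS : S.biUnion (fun x => (treePath hG s x).edges.toFinset) =
          U' ∪ ((treePath hG s v).edges.toFinset \ U') := by
        conv_lhs => rw [← Finset.insert_erase hv]
        rw [Finset.biUnion_insert, Finset.union_sdiff_self_eq_union, ← hU'def]
        exact Finset.union_comm _ _
      have hsum : ∑ e ∈ S.biUnion (fun x => (treePath hG s x).edges.toFinset), w e =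
          ∑ e ∈ U', w e + ∑ e ∈ (treePath hG s v).edges.toFinset \ U', w e := by
        rw [hUS, Finset.sum_union Finset.disjoint_sdiff]
      have hlen'' : chainSum (treeDist hG w) (s :: l1) +
          treeDist hG w ((s :: l1).getLast (List.cons_ne_nil _ _)) (l2.headD s) +
          chainSum (treeDist hG w) (l2 ++ [s]) = 2 * ∑ e ∈ U', w e := by
        rw [← e1, ← hC1, ← routeLen_eq_chainSum]
        exact hlen'
      rw [routeLen_eq_chainSum, hC2, e2, hsum]
      linarith [hkey, hlen'', hdistbv]

end Existence

end TreeTour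

/-- On a tree with nonnegative edge weights, the tour cost of any finite set `S` of
vertices (w.r.t. the tree metric and depot `s`) equals twice the total edge weight of
the minimal subtree containing `{s} ∪ S`, i.e. of the union of the paths from `s` to
the vertices of `S`. -/
theorem tourCost_tree_eq_twice_subtree {α : Type*} [Fintype α] [DecidableEq α]
    {G : SimpleGraph α} (hG : G.IsTree) (w : Sym2 α → ℝ)
    (hw : ∀ e ∈ G.edgeSet, 0 ≤ w e) (s : α) (S : Finset α) :
    tourCost (treeDist hG w) s S =
      2 * ∑ e ∈ S.biUnion (fun v => (treePath hG s v).edges.toFinset), w e := by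
  by_cases hS : S = ∅
  · subst hS
    simp [tourCost]
  · rw [tourCost, if_neg hS]
    obtain ⟨l₀, hnd₀, hfs₀, hlen₀⟩ := TreeTour.exists_good_route hG w s S
    have hmem : (2 : ℝ) * ∑ e ∈ S.biUnion (fun v => (treePath hG s v).edges.toFinset), w e ∈
        {x : ℝ | ∃ l : List α, l.Nodup ∧ l.toFinset = S ∧ x = routeLen (treeDist hG w) s l} :=
      ⟨l₀, hnd₀, hfs₀, hlen₀.symm⟩
    have hlb : ∀ x ∈ {x : ℝ | ∃ l : List α, l.Nodup ∧ l.toFinset = S ∧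
        x = routeLen (treeDist hG w) s l},
        2 * ∑ e ∈ S.biUnion (fun v => (treePath hG s v).edges.toFinset), w e ≤ x := by
      rintro x ⟨l, -, hfs, rfl⟩
      exact TreeTour.lower_bound hG w hw s S l hfs
    exact le_antisymm (csInf_le ⟨_, hlb⟩ hmem) (le_csInf ⟨_, hmem⟩ hlb)
end

section
/- Let p_1,…,p_n be positive integers (n ≥ 1) and consider the RFTT instance on the unweighted star: clients 1,…,n with turnover times τ(j) = p_j, each at distance 1 from the depot, so that the tour cost of a nonempty set S of clients equals 2|S|. If there exists a pinwheel schedule for p_1,…,p_n, then the min-max value of this instance equals 2; otherwise every feasible schedule J satisfies sup_k c(J(k)) ≥ 4. -/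
open scoped BigOperators

/-- The min-max value of the RFTT instance on the unweighted star with `n` leaves
(clients), where the tour cost of a set `S` of clients is `2|S|`: the infimum over
feasible schedules of `sup_k c(J k)` (expressed as the infimum over uniform upper
bounds on the daily tour costs of feasible schedules). -/
noncomputable def starMinMax {n : ℕ} (p : Fin n → ℕ) : ℝ :=
  sInf {B : ℝ | ∃ J : ℕ → Finset (Fin n), Feasible p J ∧
    ∀ k : ℕ, 2 * ((J k).card : ℝ) ≤ B}

/-- On the unweighted star with turnover times `p_1, …, p_n`: if a pinwheel schedule
for `p` exists then the min-max value equals 2; otherwise every feasible schedule has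
some day of tour cost at least 4. -/
theorem star_minMax_pinwheel (n : ℕ) (hn : 1 ≤ n) (p : Fin n → ℕ)
    (hp : ∀ j : Fin n, 1 ≤ p j) :
    ((∃ σ : ℕ → Finset (Fin n), Feasible p σ ∧ ∀ k : ℕ, (σ k).card ≤ 1) →
      starMinMax p = 2) ∧
    ((¬ ∃ σ : ℕ → Finset (Fin n), Feasible p σ ∧ ∀ k : ℕ, (σ k).card ≤ 1) →
      ∀ J : ℕ → Finset (Fin n), Feasible p J →
        ∃ k : ℕ, 1 ≤ k ∧ (4 : ℝ) ≤ 2 * ((J k).card : ℝ)) := by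
  constructor
  · rintro ⟨σ, hσf, hσc⟩
    have hmem : (2 : ℝ) ∈ {B : ℝ | ∃ J : ℕ → Finset (Fin n), Feasible p J ∧
        ∀ k : ℕ, 2 * ((J k).card : ℝ) ≤ B} := by
      refine ⟨σ, hσf, fun k => ?_⟩
      have h1 : ((σ k).card : ℝ) ≤ 1 := by exact_mod_cast hσc k
      linarith
    have hlb : ∀ B ∈ {B : ℝ | ∃ J : ℕ → Finset (Fin n), Feasible p J ∧
        ∀ k : ℕ, 2 * ((J k).card : ℝ) ≤ B}, (2 : ℝ) ≤ B := by
      rintro B ⟨J, hJf, hJc⟩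
      obtain ⟨k, _, _, hk3⟩ := hJf ⟨0, hn⟩ 0
      have h1 : 1 ≤ (J k).card := Finset.card_pos.mpr ⟨_, hk3⟩
      have h1' : (1 : ℝ) ≤ ((J k).card : ℝ) := by exact_mod_cast h1
      have := hJc k
      linarith
    exact le_antisymm (csInf_le ⟨2, hlb⟩ hmem) (le_csInf ⟨2, hmem⟩ hlb)
  · intro hno J hJ
    by_contra h
    push_neg at h
    apply hno
    refine ⟨fun k => if k = 0 then ∅ else J k, ?_, ?_⟩
    · intro v t
      obtain ⟨k, h1, h2, h3⟩ := hJ v t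
      have hk : k ≠ 0 := Nat.pos_iff_ne_zero.mp (lt_of_le_of_lt (Nat.zero_le t) h1)
      exact ⟨k, h1, h2, by simp [hk, h3]⟩
    · intro k
      by_cases hk : k = 0
      · simp [hk]
      · simp only [hk, if_false]
        have hlt := h k (Nat.one_le_iff_ne_zero.mpr hk)
        have : ((J k).card : ℝ) < 2 := by linarith
        have : (J k).card < 2 := by exact_mod_cast this
        omega
end

section
/- Let m ≥ 1 and let a_1,…,a_{3m} be positive integers with Σ_{i=1}^{3m} a_i = mB and B/4 < a_i < B/2 for every i. Then the following are equivalent: (1) there exists a feasible schedule J : ℕ≥1 → Finset {1,…,3m} for the constant turnover times τ(i) = m such that Σ_{i ∈ J(k)} a_i ≤ B for every day k; (2) the set {1,…,3m} can be partitioned into m three-element sets, each of which has Σ a_i = B. -/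
open scoped BigOperators

private lemma aux_eq_of_sum_ge {α : Type*} {s : Finset α} {f : α → ℕ} {c : ℕ}
    (h : ∀ x ∈ s, f x ≤ c) (hs : s.card * c ≤ ∑ x ∈ s, f x) :
    ∀ x ∈ s, f x = c := by
  intro x hx
  by_contra hne
  have hlt : f x < c := lt_of_le_of_ne (h x hx) hne
  have : ∑ y ∈ s, f y < ∑ _y ∈ s, c :=
    Finset.sum_lt_sum h ⟨x, hx, hlt⟩
  rw [Finset.sum_const, smul_eq_mul] at this
  omega

/-- Reduction from 3-Partition: for positive integers `a_1, …, a_{3m}` with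
`∑ a_i = m·B` and `B/4 < a_i < B/2`, there is a feasible schedule for constant
turnover times `m` whose daily loads `∑_{i ∈ J k} a_i` never exceed `B` (for days
`k ≥ 1`) if and only if the indices can be partitioned into `m` triples each of
`a`-sum exactly `B`. -/
theorem star_threePartition (m B : ℕ) (hm : 1 ≤ m) (a : Fin (3 * m) → ℕ)
    (ha : ∀ i, 1 ≤ a i) (hsum : ∑ i, a i = m * B)
    (hlb : ∀ i, B < 4 * a i) (hub : ∀ i, 2 * a i < B) :
    (∃ J : ℕ → Finset (Fin (3 * m)), Feasible (fun _ => m) J ∧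
      ∀ k : ℕ, 1 ≤ k → ∑ i ∈ J k, a i ≤ B) ↔
    (∃ P : Fin m → Finset (Fin (3 * m)),
      (∀ l : Fin m, (P l).card = 3 ∧ ∑ i ∈ P l, a i = B) ∧
      (∀ l l' : Fin m, l ≠ l' → Disjoint (P l) (P l')) ∧
      Finset.univ.biUnion P = Finset.univ) := by
  constructor
  · rintro ⟨J, hfeas, hload⟩
    -- every day's set has at most 3 clients
    have hcard3 : ∀ k, 1 ≤ k → (J k).card ≤ 3 := by
      intro k hk
      by_contra h
      push_neg at h
      obtain ⟨S, hSsub, hScard⟩ := Finset.exists_subset_card_eq (s := J k) (n := 4) h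
      have h1 : ∑ i ∈ S, a i ≤ B :=
        le_trans (Finset.sum_le_sum_of_subset hSsub) (hload k hk)
      have h2 : ∀ i ∈ S, B + 1 ≤ 4 * a i := fun i _ => hlb i
      have h3 : S.card * (B + 1) ≤ ∑ i ∈ S, 4 * a i := by
        calc S.card * (B + 1) = ∑ _i ∈ S, (B + 1) := by
              rw [Finset.sum_const, smul_eq_mul]
          _ ≤ ∑ i ∈ S, 4 * a i := Finset.sum_le_sum h2
      rw [← Finset.mul_sum, hScard] at h3
      omega
    -- every client appears in days 1..m
    have hcover : ∀ v : Fin (3 * m), ∃ k ∈ Finset.Icc 1 m, v ∈ J k := by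
      intro v
      obtain ⟨k, h1, h2, h3⟩ := hfeas v 0
      exact ⟨k, Finset.mem_Icc.mpr ⟨h1, by simpa using h2⟩, h3⟩
    have huniv : (Finset.Icc 1 m).biUnion J = Finset.univ := by
      apply Finset.eq_univ_iff_forall.mpr
      intro v
      obtain ⟨k, hk, hv⟩ := hcover v
      exact Finset.mem_biUnion.mpr ⟨k, hk, hv⟩
    have hIcc : (Finset.Icc 1 m).card = m := by
      rw [Nat.card_Icc]; omega
    have hsumcard_le : ∑ k ∈ Finset.Icc 1 m, (J k).card ≤ m * 3 := by
      calc ∑ k ∈ Finset.Icc 1 m, (J k).card ≤ (Finset.Icc 1 m).card * 3 := by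
            apply Finset.sum_le_card_nsmul
            intro k hk
            exact hcard3 k (Finset.mem_Icc.mp hk).1
        _ = m * 3 := by rw [hIcc]
    have hsumcard_ge : 3 * m ≤ ∑ k ∈ Finset.Icc 1 m, (J k).card := by
      calc 3 * m = (Finset.univ : Finset (Fin (3 * m))).card := by simp
        _ = ((Finset.Icc 1 m).biUnion J).card := by rw [huniv]
        _ ≤ ∑ k ∈ Finset.Icc 1 m, (J k).card := Finset.card_biUnion_le
    -- each day in 1..m has exactly 3 clients
    have hcard_eq : ∀ k ∈ Finset.Icc 1 m, (J k).card = 3 := by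
      apply aux_eq_of_sum_ge
      · intro k hk; exact hcard3 k (Finset.mem_Icc.mp hk).1
      · rw [hIcc]; omega
    -- days 1..m are pairwise disjoint
    have hdisj : ∀ k ∈ Finset.Icc 1 m, ∀ k' ∈ Finset.Icc 1 m, k ≠ k' →
        Disjoint (J k) (J k') := by
      intro k hk k' hk' hne
      rw [Finset.disjoint_left]
      intro x hxk hxk'
      by_contra
      -- build a covering set of size < 3m
      set T := (((Finset.Icc 1 m).erase k').biUnion J) ∪ ((J k').erase x) with hT
      have hTcover : (Finset.univ : Finset (Fin (3 * m))) ⊆ T := by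
        intro v _
        obtain ⟨j, hj, hv⟩ := hcover v
        rcases eq_or_ne j k' with rfl | hjne
        · rcases eq_or_ne v x with rfl | hvne
          · exact Finset.mem_union_left _
              (Finset.mem_biUnion.mpr ⟨k, Finset.mem_erase.mpr ⟨hne, hk⟩, hxk⟩)
          · exact Finset.mem_union_right _ (Finset.mem_erase.mpr ⟨hvne, hv⟩)
        · exact Finset.mem_union_left _
            (Finset.mem_biUnion.mpr ⟨j, Finset.mem_erase.mpr ⟨hjne, hj⟩, hv⟩)
      have hTcard : T.card ≤ 3 * (m - 1) + 2 := by
        calc T.card ≤ (((Finset.Icc 1 m).erase k').biUnion J).card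
              + ((J k').erase x).card := Finset.card_union_le _ _
          _ ≤ (∑ j ∈ (Finset.Icc 1 m).erase k', (J j).card)
              + ((J k').erase x).card :=
              Nat.add_le_add_right Finset.card_biUnion_le _
          _ ≤ ((Finset.Icc 1 m).erase k').card * 3 + 2 := by
              apply Nat.add_le_add
              · apply Finset.sum_le_card_nsmul
                intro j hj
                exact hcard3 j (Finset.mem_Icc.mp (Finset.mem_erase.mp hj).2).1
              · have := Finset.card_erase_of_mem hxk'
                have := hcard_eq k' hk'
                omega
          _ ≤ 3 * (m - 1) + 2 := by
              rw [Finset.card_erase_of_mem hk', hIcc]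
              omega
      have h3m : 3 * m ≤ T.card := by
        calc 3 * m = (Finset.univ : Finset (Fin (3 * m))).card := by simp
          _ ≤ T.card := Finset.card_le_card hTcover
      omega
    -- sum over days equals total
    have hsum_days : ∑ k ∈ Finset.Icc 1 m, ∑ i ∈ J k, a i = m * B := by
      rw [← Finset.sum_biUnion, huniv, hsum]
      intro k hk k' hk' hne
      exact hdisj k hk k' hk' hne
    have hsum_eq : ∀ k ∈ Finset.Icc 1 m, ∑ i ∈ J k, a i = B := by
      apply aux_eq_of_sum_ge
      · intro k hk; exact hload k (Finset.mem_Icc.mp hk).1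
      · rw [hIcc, hsum_days]
    -- define the partition
    have hmem : ∀ l : Fin m, l.val + 1 ∈ Finset.Icc 1 m :=
      fun l => Finset.mem_Icc.mpr ⟨Nat.le_add_left 1 _, by omega⟩
    refine ⟨fun l => J (l.val + 1), ?_, ?_, ?_⟩
    · intro l
      exact ⟨hcard_eq _ (hmem l), hsum_eq _ (hmem l)⟩
    · intro l l' hne
      apply hdisj _ (hmem l) _ (hmem l')
      intro h
      exact hne (Fin.ext (by omega))
    · apply Finset.eq_univ_iff_forall.mpr
      intro v
      obtain ⟨k, hk, hv⟩ := hcover v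
      obtain ⟨hk1, hk2⟩ := Finset.mem_Icc.mp hk
      refine Finset.mem_biUnion.mpr ⟨⟨k - 1, by omega⟩, Finset.mem_univ _, ?_⟩
      have : k - 1 + 1 = k := by omega
      simpa [this] using hv
  · rintro ⟨P, hP, hPdisj, hPuniv⟩
    refine ⟨fun k => P ⟨(k - 1) % m, Nat.mod_lt _ hm⟩, ?_, ?_⟩
    · intro v t
      obtain ⟨l, hl⟩ : ∃ l, v ∈ P l := by
        have := Finset.eq_univ_iff_forall.mp hPuniv v
        obtain ⟨l, _, hl⟩ := Finset.mem_biUnion.mp this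
        exact ⟨l, hl⟩
      have hdm := Nat.div_add_mod t m
      have hrm : t % m < m := Nat.mod_lt _ hm
      have hlm : l.val < m := l.isLt
      have hmm : m * (t / m + 1) = m * (t / m) + m := by ring
      rcases le_or_gt (t % m) l.val with hc | hc
      · refine ⟨m * (t / m) + l.val + 1, by omega, ?_, ?_⟩
        · show m * (t / m) + l.val + 1 ≤ t + m
          omega
        · show v ∈ P ⟨(m * (t / m) + l.val + 1 - 1) % m, Nat.mod_lt _ hm⟩
          have h2 : (m * (t / m) + l.val + 1 - 1) % m = l.val := by
            have h1 : m * (t / m) + l.val + 1 - 1 = m * (t / m) + l.val := by omega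
            rw [h1, Nat.mul_add_mod, Nat.mod_eq_of_lt hlm]
          have hfin : (⟨(m * (t / m) + l.val + 1 - 1) % m, Nat.mod_lt _ hm⟩ : Fin m) = l :=
            Fin.ext h2
          rw [hfin]; exact hl
      · refine ⟨m * (t / m + 1) + l.val + 1, by omega, ?_, ?_⟩
        · show m * (t / m + 1) + l.val + 1 ≤ t + m
          omega
        · show v ∈ P ⟨(m * (t / m + 1) + l.val + 1 - 1) % m, Nat.mod_lt _ hm⟩
          have h2 : (m * (t / m + 1) + l.val + 1 - 1) % m = l.val := by
            have h1 : m * (t / m + 1) + l.val + 1 - 1 = m * (t / m + 1) + l.val := by omega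
            rw [h1, Nat.mul_add_mod, Nat.mod_eq_of_lt hlm]
          have hfin : (⟨(m * (t / m + 1) + l.val + 1 - 1) % m, Nat.mod_lt _ hm⟩ : Fin m) = l :=
            Fin.ext h2
          rw [hfin]; exact hl
    · intro k _
      exact le_of_eq (hP _).2
end

section
/- Let p_1,…,p_n be positive integers. Construct the weighted graph G with vertex set {s, w¹, w, w²} ∪ {v_1¹,…,v_n¹} ∪ {v_1²,…,v_n²}, edges {s,v_j^i} and {w^i,v_j^i} for all j ∈ {1,…,n} and i ∈ {1,2}, and edges {w¹,w}, {w²,w}, all of weight 1; set turnover times τ(w¹) = τ(w) = τ(w²) = 1 and τ(v_j¹) = τ(v_j²) = p_j. Then the RFTT instance (G,τ) with depot s admits a feasible periodic schedule of average tour cost at most 6 (in the shortest-path metric of G) if and only if there exists a pinwheel schedule for p_1,…,p_n. -/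
open scoped BigOperators

/-- Vertices of the reduction graph: `Sum.inl 0 = s`, `Sum.inl 1 = w¹`,
`Sum.inl 2 = w`, `Sum.inl 3 = w²`, and `Sum.inr (j, 0) = v_j¹`,
`Sum.inr (j, 1) = v_j²`. -/
abbrev RedVtx (n : ℕ) := (Fin 4) ⊕ (Fin n × Fin 2)

/-- The edges of the reduction graph: `{s, v_j^i}` and `{w^i, v_j^i}` for all `j, i`,
together with `{w¹, w}` and `{w², w}`. -/
def redRel (n : ℕ) (x y : RedVtx n) : Prop :=
  (x = Sum.inl 0 ∧ ∃ j i, y = Sum.inr (j, i)) ∨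
  (∃ j, x = Sum.inl 1 ∧ y = Sum.inr (j, 0)) ∨
  (∃ j, x = Sum.inl 3 ∧ y = Sum.inr (j, 1)) ∨
  (x = Sum.inl 2 ∧ (y = Sum.inl 1 ∨ y = Sum.inl 3))

/-- The reduction graph (all edge weights are 1, so its shortest-path metric is the
graph distance). -/
def redGraph (n : ℕ) : SimpleGraph (RedVtx n) := SimpleGraph.fromRel (redRel n)

/-- Turnover times: `τ(w¹) = τ(w) = τ(w²) = 1` and `τ(v_j¹) = τ(v_j²) = p j`. -/
def redTau {n : ℕ} (p : Fin n → ℕ) : RedVtx n → ℕ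
  | Sum.inl _ => 1
  | Sum.inr (j, _) => p j

namespace Red

variable {X : Type*} (d : X → X → ℝ)

def pathSum : List X → ℝ
  | [] => 0
  | [_] => 0
  | x :: y :: t => d x y + pathSum (y :: t)

lemma routeLen_eq_pathSum (s : X) (l : List X) :
    routeLen d s l = pathSum d (s :: l ++ [s]) := by
  suffices h : ∀ (m : List X) (a b : X),
      (List.zip (a :: m) (m ++ [b])).foldr (fun p acc => d p.1 p.2 + acc) 0
        = pathSum d (a :: m ++ [b]) by
    exact h l s s
  intro m
  induction m with
  | nil => intro a b; simp [pathSum]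
  | cons x t ih =>
      intro a b
      simp only [List.cons_append, List.zip_cons_cons, List.foldr_cons, pathSum, List.append_eq]
      rw [ih x b]
      simp

lemma pathSum_nonneg (hd : ∀ a b, 0 ≤ d a b) : ∀ l : List X, 0 ≤ pathSum d l := by
  intro l
  induction l with
  | nil => simp [pathSum]
  | cons x t ih =>
      cases t with
      | nil => simp [pathSum]
      | cons y t' =>
          simp only [pathSum]
          have := hd x y
          linarith

variable (htri : ∀ a b c : X, d a c ≤ d a b + d b c)

include htri

lemma le_pathSum_head (b : X) : ∀ (l : List X) (u : X), d u b ≤ pathSum d (u :: l ++ [b]) := by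
  intro l
  induction l with
  | nil => intro u; simp [pathSum]
  | cons x t ih =>
      intro u
      simp only [List.cons_append, pathSum]
      calc d u b ≤ d u x + d x b := htri u x b
        _ ≤ d u x + pathSum d (x :: t ++ [b]) := by linarith [ih x]

lemma pathSum_cons_le (u a x : X) (m : List X) :
    pathSum d (u :: x :: m) ≤ d u a + pathSum d (a :: x :: m) := by
  simp only [pathSum]
  have := htri u a x
  linarith

lemma Sublist.pathSum_le (b : X) :
    ∀ {l' l : List X}, List.Sublist l' l → ∀ u : X,
      pathSum d (u :: l' ++ [b]) ≤ pathSum d (u :: l ++ [b]) := by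
  intro l' l h
  induction h with
  | slnil => intro u; rfl
  | @cons l₁ l₂ a h ih =>
      intro u
      calc pathSum d (u :: l₁ ++ [b]) ≤ d u a + pathSum d (a :: l₁ ++ [b]) := by
            rcases l₁ with _ | ⟨x, t⟩
            · simpa [pathSum] using htri u a b
            · exact pathSum_cons_le d htri u a x (t ++ [b])
        _ ≤ d u a + pathSum d (a :: l₂ ++ [b]) := by linarith [ih a]
        _ = pathSum d (u :: (a :: l₂) ++ [b]) := by simp [pathSum]
  | @cons_cons l₁ l₂ a h ih =>
      intro u
      have := ih a
      simp only [List.cons_append, pathSum, List.append_eq] at this ⊢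
      linarith

lemma six_le_pathSum {s C : X} (l : List X) (hC : C ∈ l)
    (h1 : 3 ≤ d s C) (h2 : 3 ≤ d C s) :
    6 ≤ pathSum d (s :: l ++ [s]) := by
  have hsub : List.Sublist [C] l := List.singleton_sublist.mpr hC
  have := Sublist.pathSum_le d htri s hsub s
  simp only [pathSum, List.cons_append, List.nil_append] at this ⊢
  linarith

set_option maxHeartbeats 2000000 in
lemma eight_le_pathSum {s A B C D : X} [DecidableEq X] (l : List X)
    (hl : l.Nodup) (hS : l.toFinset = {A, B, C, D})
    (hAB : A ≠ B) (hAC : A ≠ C) (hAD : A ≠ D) (hBC : B ≠ C) (hBD : B ≠ D) (hCD : C ≠ D)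
    (dsA : 1 ≤ d s A) (dsB : 1 ≤ d s B) (dsC : 3 ≤ d s C) (dsD : 2 ≤ d s D)
    (dAs : 1 ≤ d A s) (dBs : 1 ≤ d B s) (dCs : 3 ≤ d C s) (dDs : 2 ≤ d D s)
    (dAB : 2 ≤ d A B) (dBA : 2 ≤ d B A) (dAC : 2 ≤ d A C) (dCA : 2 ≤ d C A)
    (dBC : 2 ≤ d B C) (dCB : 2 ≤ d C B) (dAD : 3 ≤ d A D) (dDA : 3 ≤ d D A)
    (dBD : 3 ≤ d B D) (dDB : 3 ≤ d D B) (dCD : 1 ≤ d C D) (dDC : 1 ≤ d D C) :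
    8 ≤ pathSum d (s :: l ++ [s]) := by
  have hcard : ({A, B, C, D} : Finset X).card = 4 := by
    rw [Finset.card_insert_of_notMem (by simp [hAB, hAC, hAD]),
      Finset.card_insert_of_notMem (by simp [hBC, hBD]),
      Finset.card_insert_of_notMem (by simp [hCD]), Finset.card_singleton]
  have hlen : l.length = 4 := by
    rw [← List.toFinset_card_of_nodup hl, hS, hcard]
  rcases l with _ | ⟨a, _ | ⟨b, _ | ⟨c, _ | ⟨e, _ | ⟨f, t⟩⟩⟩⟩⟩ <;> simp at hlen
  have ha : a ∈ ({A, B, C, D} : Finset X) := by rw [← hS]; simp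
  have hb : b ∈ ({A, B, C, D} : Finset X) := by rw [← hS]; simp
  have hc : c ∈ ({A, B, C, D} : Finset X) := by rw [← hS]; simp
  have he : e ∈ ({A, B, C, D} : Finset X) := by rw [← hS]; simp
  simp only [Finset.mem_insert, Finset.mem_singleton] at ha hb hc he
  obtain ⟨n1, n2, n3, n4, n5, n6⟩ :
      a ≠ b ∧ a ≠ c ∧ a ≠ e ∧ b ≠ c ∧ b ≠ e ∧ c ≠ e := by
    simp only [List.nodup_cons, List.mem_cons, List.mem_singleton, List.not_mem_nil,
      or_false, List.nodup_nil, and_true, not_or] at hl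
    tauto
  simp only [List.cons_append, List.nil_append, pathSum]
  rcases ha with rfl | rfl | rfl | rfl <;> rcases hb with rfl | rfl | rfl | rfl <;>
    rcases hc with rfl | rfl | rfl | rfl <;> rcases he with rfl | rfl | rfl | rfl <;>
      first
        | (exact absurd rfl n1) | (exact absurd rfl n2) | (exact absurd rfl n3)
        | (exact absurd rfl n4) | (exact absurd rfl n5) | (exact absurd rfl n6)
        | linarith

end Red
namespace Red
variable {n : ℕ}

lemma adj_s_v (j : Fin n) (i : Fin 2) :
    (redGraph n).Adj (Sum.inl 0) (Sum.inr (j, i)) := by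
  rw [redGraph, SimpleGraph.fromRel_adj]
  exact ⟨by simp, Or.inl (Or.inl ⟨rfl, j, i, rfl⟩)⟩

lemma adj_w1_v (j : Fin n) :
    (redGraph n).Adj (Sum.inl 1) (Sum.inr (j, 0)) := by
  rw [redGraph, SimpleGraph.fromRel_adj]
  exact ⟨by simp, Or.inl (Or.inr (Or.inl ⟨j, rfl, rfl⟩))⟩

lemma adj_w2_v (j : Fin n) :
    (redGraph n).Adj (Sum.inl 3) (Sum.inr (j, 1)) := by
  rw [redGraph, SimpleGraph.fromRel_adj]
  exact ⟨by simp, Or.inl (Or.inr (Or.inr (Or.inl ⟨j, rfl, rfl⟩)))⟩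

lemma adj_w_w1 : (redGraph n).Adj (Sum.inl 2) (Sum.inl 1) := by
  rw [redGraph, SimpleGraph.fromRel_adj]
  exact ⟨by simp, Or.inl (Or.inr (Or.inr (Or.inr ⟨rfl, Or.inl rfl⟩)))⟩

lemma adj_w_w2 : (redGraph n).Adj (Sum.inl 2) (Sum.inl 3) := by
  rw [redGraph, SimpleGraph.fromRel_adj]
  exact ⟨by simp, Or.inl (Or.inr (Or.inr (Or.inr ⟨rfl, Or.inr rfl⟩)))⟩

lemma reachable_from_s (hn : 0 < n) (x : RedVtx n) :
    (redGraph n).Reachable (Sum.inl 0) x := by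
  set j0 : Fin n := ⟨0, hn⟩
  cases x with
  | inl a =>
      fin_cases a
      · exact SimpleGraph.Reachable.refl _
      · exact ((adj_s_v j0 0).reachable).trans (adj_w1_v j0).reachable.symm
      · exact (((adj_s_v j0 0).reachable).trans (adj_w1_v j0).reachable.symm).trans
          adj_w_w1.reachable.symm
      · exact ((adj_s_v j0 1).reachable).trans (adj_w2_v j0).reachable.symm
  | inr q => exact (adj_s_v q.1 q.2).reachable

lemma connected (hn : 0 < n) : (redGraph n).Connected := by
  rw [SimpleGraph.connected_iff]
  exact ⟨fun a b => (reachable_from_s hn a).symm.trans (reachable_from_s hn b),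
    ⟨Sum.inl 0⟩⟩

lemma abs_le_length {V : Type*} {G : SimpleGraph V} (f : V → ℤ)
    (hf : ∀ x y, G.Adj x y → |f x - f y| ≤ 1) {u v : V} (pth : G.Walk u v) :
    |f u - f v| ≤ (pth.length : ℤ) := by
  induction pth with
  | nil => simp
  | @cons a x c h q ih =>
      have h1 := hf a x h
      have h2 := abs_sub_le (f a) (f x) (f c)
      simp only [SimpleGraph.Walk.length_cons]
      push_cast
      linarith

lemma abs_le_dist {V : Type*} {G : SimpleGraph V} (hc : G.Connected) (f : V → ℤ)
    (hf : ∀ x y, G.Adj x y → |f x - f y| ≤ 1) (u v : V) :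
    |f u - f v| ≤ (G.dist u v : ℤ) := by
  obtain ⟨pth, hpl⟩ := hc.exists_walk_length_eq_dist u v
  rw [← hpl]
  exact abs_le_length f hf pth

def pot1 : RedVtx n → ℤ
  | Sum.inl 0 => 0
  | Sum.inl 1 => 2
  | Sum.inl 2 => 3
  | Sum.inl 3 => 2
  | Sum.inr _ => 1

def pot2 : RedVtx n → ℤ
  | Sum.inl 0 => 1
  | Sum.inl 1 => 1
  | Sum.inl 2 => 2
  | Sum.inl 3 => 3
  | Sum.inr q => 2 * (q.2.val : ℤ)

def pot3 (j0 : Fin n) : RedVtx n → ℤ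
  | Sum.inl 0 => 1
  | Sum.inl 1 => 1
  | Sum.inl 2 => 2
  | Sum.inl 3 => 2
  | Sum.inr q => if q = (j0, 0) then 0 else 2

lemma pot_lip (f : RedVtx n → ℤ) (hrel : ∀ x y, redRel n x y → |f x - f y| ≤ 1) :
    ∀ x y, (redGraph n).Adj x y → |f x - f y| ≤ 1 := by
  intro x y h
  rw [redGraph, SimpleGraph.fromRel_adj] at h
  obtain ⟨-, h | h⟩ := h
  · exact hrel x y h
  · rw [abs_sub_comm]; exact hrel y x h

lemma pot1_lip : ∀ x y, (redGraph n).Adj x y → |pot1 x - pot1 y| ≤ 1 := by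
  apply pot_lip
  rintro x y (⟨rfl, j, i, rfl⟩ | ⟨j, rfl, rfl⟩ | ⟨j, rfl, rfl⟩ | ⟨rfl, rfl | rfl⟩) <;>
    norm_num [pot1]

lemma pot2_lip : ∀ x y, (redGraph n).Adj x y → |pot2 x - pot2 y| ≤ 1 := by
  apply pot_lip
  rintro x y (⟨rfl, j, i, rfl⟩ | ⟨j, rfl, rfl⟩ | ⟨j, rfl, rfl⟩ | ⟨rfl, rfl | rfl⟩)
  · have hi := i.isLt
    simp only [pot2]
    rw [abs_le]
    constructor <;> omega
  · norm_num [pot2]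
  · norm_num [pot2]
  · norm_num [pot2]
  · norm_num [pot2]

lemma pot3_lip (j0 : Fin n) :
    ∀ x y, (redGraph n).Adj x y → |pot3 j0 x - pot3 j0 y| ≤ 1 := by
  apply pot_lip
  rintro x y (⟨rfl, j, i, rfl⟩ | ⟨j, rfl, rfl⟩ | ⟨j, rfl, rfl⟩ | ⟨rfl, rfl | rfl⟩)
  · simp only [pot3]
    split_ifs <;> norm_num
  · simp only [pot3]
    split_ifs <;> norm_num
  · simp only [pot3]
    split_ifs with h
    · have h2 : (1 : Fin 2) = 0 := congrArg Prod.snd h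
      exact absurd h2 (by decide)
    · norm_num
  · norm_num [pot3]
  · norm_num [pot3]

section Dist
variable (hn : 0 < n)
include hn

lemma dist_s_w : 3 ≤ (redGraph n).dist (Sum.inl 0) (Sum.inl 2) := by
  have h := abs_le_dist (connected hn) pot1 pot1_lip (Sum.inl 0) (Sum.inl 2)
  simp only [pot1] at h
  norm_num at h
  exact_mod_cast h

lemma dist_s_w2 : 2 ≤ (redGraph n).dist (Sum.inl 0) (Sum.inl 3) := by
  have h := abs_le_dist (connected hn) pot1 pot1_lip (Sum.inl 0) (Sum.inl 3)
  simp only [pot1] at h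
  norm_num at h
  exact_mod_cast h

lemma dist_v_w (j : Fin n) (i : Fin 2) :
    2 ≤ (redGraph n).dist (Sum.inr (j, i)) (Sum.inl 2) := by
  have h := abs_le_dist (connected hn) pot1 pot1_lip (Sum.inr (j, i)) (Sum.inl 2)
  simp only [pot1] at h
  norm_num at h
  exact_mod_cast h

lemma dist_v_w2 (j : Fin n) :
    3 ≤ (redGraph n).dist (Sum.inr (j, 0)) (Sum.inl 3) := by
  have h := abs_le_dist (connected hn) pot2 pot2_lip (Sum.inr (j, 0)) (Sum.inl 3)
  simp only [pot2] at h
  norm_num at h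
  exact_mod_cast h

lemma dist_vv {j k : Fin n} (hjk : j ≠ k) :
    2 ≤ (redGraph n).dist (Sum.inr (j, 0)) (Sum.inr (k, 0)) := by
  have h := abs_le_dist (connected hn) (pot3 j) (pot3_lip j)
    (Sum.inr (j, 0)) (Sum.inr (k, 0))
  have e1 : pot3 j (Sum.inr (j, 0) : RedVtx n) = 0 := by simp [pot3]
  have e2 : pot3 j (Sum.inr (k, 0) : RedVtx n) = 2 := by
    simp only [pot3]
    rw [if_neg]
    simp [Ne.symm hjk]
  rw [e1, e2] at h
  norm_num at h
  exact_mod_cast h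

lemma dist_s_v (j : Fin n) (i : Fin 2) :
    1 ≤ (redGraph n).dist (Sum.inl 0) (Sum.inr (j, i)) :=
  (connected hn).pos_dist_of_ne (by simp)

lemma dist_w_w2 : 1 ≤ (redGraph n).dist (Sum.inl 2) (Sum.inl 3) :=
  (connected hn).pos_dist_of_ne (by simp)

lemma dist_s_w1_le : (redGraph n).dist (Sum.inl 0) (Sum.inl 1) ≤ 2 := by
  have h := SimpleGraph.dist_le (SimpleGraph.Walk.cons (adj_s_v ⟨0, hn⟩ 0)
      (SimpleGraph.Walk.cons (adj_w1_v ⟨0, hn⟩).symm SimpleGraph.Walk.nil))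
  simpa using h

lemma dist_w2_s_le : (redGraph n).dist (Sum.inl 3) (Sum.inl 0) ≤ 2 := by
  have h := SimpleGraph.dist_le (SimpleGraph.Walk.cons (adj_w2_v ⟨0, hn⟩)
      (SimpleGraph.Walk.cons (adj_s_v ⟨0, hn⟩ 1).symm SimpleGraph.Walk.nil))
  simpa using h

end Dist

lemma dist_le_one_of_adj {x y : RedVtx n} (h : (redGraph n).Adj x y) :
    (redGraph n).dist x y ≤ 1 :=
  (SimpleGraph.dist_eq_one_iff_adj.mpr h).le

end Red
namespace Red
lemma eq_of_modeq_window {ℓ lo a b : ℕ} (hℓ : 0 < ℓ) (ha1 : lo ≤ a) (ha2 : a < lo + ℓ)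
    (hb1 : lo ≤ b) (hb2 : b < lo + ℓ) (h : a % ℓ = b % ℓ) : a = b := by
  rcases le_total a b with hab | hab
  · have hd := (Nat.modEq_iff_dvd' hab).mp h
    rcases Nat.eq_zero_or_pos (b - a) with h0 | h0
    · omega
    · have := Nat.le_of_dvd h0 hd; omega
  · have hd := (Nat.modEq_iff_dvd' hab).mp h.symm
    rcases Nat.eq_zero_or_pos (a - b) with h0 | h0
    · omega
    · have := Nat.le_of_dvd h0 hd; omega

lemma exists_periodic_pinwheel {n : ℕ} (p : Fin n → ℕ) (hp : ∀ j, 1 ≤ p j)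
    (σ : ℕ → Finset (Fin n)) (hcard : ∀ k, (σ k).card ≤ 1)
    (hcov : ∀ j t, ∃ k, t < k ∧ k ≤ t + p j ∧ j ∈ σ k) :
    ∃ (σ' : ℕ → Finset (Fin n)) (ℓ : ℕ), 1 ≤ ℓ ∧
      (∀ k, σ' (k + ℓ) = σ' k) ∧ (∀ k, (σ' k).card ≤ 1) ∧
      (∀ j t, ∃ k, t < k ∧ k ≤ t + p j ∧ j ∈ σ' k) := by
  have hex : ∀ j t, ∃ m : ℕ, j ∈ σ (t + 1 + m) := by
    intro j t
    obtain ⟨k, h1, h2, h3⟩ := hcov j t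
    exact ⟨k - t - 1, by rwa [show t + 1 + (k - t - 1) = k by omega]⟩
  set gap : Fin n → ℕ → ℕ := fun j t => Nat.find (hex j t) with hgap_def
  have hgap_mem : ∀ j t, j ∈ σ (t + 1 + gap j t) := fun j t => Nat.find_spec (hex j t)
  have hgap_lt : ∀ j t, gap j t < p j := by
    intro j t
    obtain ⟨k, h1, h2, h3⟩ := hcov j t
    have : gap j t ≤ k - t - 1 :=
      Nat.find_le (by rwa [show t + 1 + (k - t - 1) = k by omega])
    have := hp j
    omega
  have hgap_min : ∀ j t m, m < gap j t → j ∉ σ (t + 1 + m) := by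
    intro j t m hm
    exact Nat.find_min (hex j t) hm
  -- pigeonhole on profiles
  set M : ℕ := (∑ j, p j) + 1 with hM_def
  have hpM : ∀ j, p j < M := by
    intro j
    have : p j ≤ ∑ j, p j := Finset.single_le_sum (fun _ _ => Nat.zero_le _)
      (Finset.mem_univ j)
    omega
  obtain ⟨a, b, hab, heq⟩ :=
    Finite.exists_ne_map_eq_of_infinite
      (fun i : ℕ => (fun j => (⟨gap j (i * M), hgap_lt j _⟩ : Fin (p j))))
  set i1 := min a b with hi1
  set i2 := max a b with hi2
  have hi12 : i1 < i2 := by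
    rcases Nat.lt_or_ge a b with h | h
    · simp [hi1, hi2]; omega
    · have : b < a := by omega
      simp [hi1, hi2]; omega
  set t1 := i1 * M with ht1
  set ℓ := (i2 - i1) * M with hℓ_def
  have hM1 : 1 ≤ M := by omega
  have hℓpos : 0 < ℓ := by
    have : 1 ≤ i2 - i1 := by omega
    exact Nat.mul_pos (by omega) (by omega)
  have ht2 : i2 * M = t1 + ℓ := by
    rw [ht1, hℓ_def, ← Nat.add_mul]
    congr 1
    omega
  have hpℓ : ∀ j, p j ≤ ℓ := by
    intro j
    have h1 : M ≤ ℓ := by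
      rw [hℓ_def]
      calc M = 1 * M := (one_mul M).symm
        _ ≤ (i2 - i1) * M := Nat.mul_le_mul_right M (by omega)
    exact le_trans (le_of_lt (hpM j)) h1
  have hprof : ∀ j, gap j t1 = gap j (t1 + ℓ) := by
    intro j
    have h1 := congrFun heq j
    have h2 : gap j (a * M) = gap j (b * M) := congrArg Fin.val h1
    rw [← ht2]
    rcases Nat.lt_or_ge a b with h | h
    · have e1 : i1 = a := by simp [hi1]; omega
      have e2 : i2 = b := by simp [hi2]; omega
      rw [ht1, e1, e2]; exact h2
    · have e1 : i1 = b := by simp [hi1]; omega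
      have e2 : i2 = a := by simp [hi2]; omega
      rw [ht1, e1, e2]; exact h2.symm
  -- the periodic schedule
  set c : ℕ := ℓ - (t1 + 1) % ℓ with hc
  set ρ : ℕ → ℕ := fun k => t1 + 1 + ((k + c) % ℓ) with hρ_def
  have hρ_lo : ∀ k, t1 + 1 ≤ ρ k := fun k => Nat.le_add_right _ _
  have hρ_hi : ∀ k, ρ k < t1 + 1 + ℓ := by
    intro k
    have := Nat.mod_lt (k + c) hℓpos
    simp only [hρ_def]
    omega
  have hρ_mod : ∀ k, ρ k % ℓ = k % ℓ := by
    intro k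
    have hq := Nat.div_add_mod (t1 + 1) ℓ
    have hrlt : (t1 + 1) % ℓ < ℓ := Nat.mod_lt _ hℓpos
    have e : t1 + 1 + c = ℓ * ((t1 + 1) / ℓ + 1) := by
      rw [Nat.mul_add, Nat.mul_one]; omega
    calc (t1 + 1 + ((k + c) % ℓ)) % ℓ = (t1 + 1 + (k + c)) % ℓ := by
          rw [Nat.add_mod_mod]
      _ = (k + (t1 + 1 + c)) % ℓ := by ring_nf
      _ = (k + ℓ * ((t1 + 1) / ℓ + 1)) % ℓ := by rw [e]
      _ = k % ℓ := by rw [Nat.add_mul_mod_self_left]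
  have hρ_eq : ∀ k m, t1 + 1 ≤ m → m < t1 + 1 + ℓ → m % ℓ = k % ℓ → ρ k = m := by
    intro k m h1 h2 h3
    exact eq_of_modeq_window hℓpos (hρ_lo k) (hρ_hi k) h1 h2 (by rw [hρ_mod k, h3])
  refine ⟨fun k => σ (ρ k), ℓ, by omega, ?_, fun k => hcard _, ?_⟩
  · intro k
    have h2 : ρ (k + ℓ) = ρ k := by
      simp only [hρ_def]
      rw [show k + ℓ + c = k + c + ℓ by ring, Nat.add_mod_right]
    show σ (ρ (k + ℓ)) = σ (ρ k)
    rw [h2]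
  · intro j t
    -- u : aligned copy of t inside the window [t1, t1+ℓ)
    set u : ℕ := ρ (t + 1) - 1 with hu
    have hu1 : ρ (t + 1) = u + 1 := by
      have := hρ_lo (t + 1); omega
    have hut : (u + 1) % ℓ = (t + 1) % ℓ := by rw [← hu1, hρ_mod]
    have hu_lo : t1 ≤ u := by have := hρ_lo (t + 1); omega
    have hu_hi : u < t1 + ℓ := by have := hρ_hi (t + 1); omega
    set g := gap j u with hg
    have hK_mem : j ∈ σ (u + 1 + g) := hgap_mem j u
    have hglt : g < p j := hgap_lt j u
    refine ⟨t + 1 + g, by omega, by omega, ?_⟩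
    have hmodk : (u + 1 + g) % ℓ = (t + 1 + g) % ℓ := by
      have : Nat.ModEq ℓ (u + 1) (t + 1) := hut
      have h2 := Nat.ModEq.add_right g this
      exact h2
    by_cases hcase : u + 1 + g < t1 + 1 + ℓ
    · have h2 : ρ (t + 1 + g) = u + 1 + g := hρ_eq _ _ (by omega) hcase hmodk
      show j ∈ σ (ρ (t + 1 + g))
      rw [h2]
      exact hK_mem
    · -- the occurrence lies beyond the window; shift using equal profiles
      set K := u + 1 + g with hKdef
      set g2 := K - (t1 + ℓ) - 1 with hg2
      have hKt2 : t1 + ℓ + 1 + g2 = K := by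
        have : t1 + 1 + ℓ ≤ K := by omega
        omega
      have hgap_t2 : gap j (t1 + ℓ) = g2 := by
        rw [hgap_def]
        rw [Nat.find_eq_iff]
        constructor
        · rw [show t1 + ℓ + 1 + g2 = K from hKt2]
          exact hK_mem
        · intro m hm
          have hlt : t1 + ℓ + m - u < g := by omega
          have := hgap_min j u (t1 + ℓ + m - u) hlt
          rwa [show u + 1 + (t1 + ℓ + m - u) = t1 + ℓ + 1 + m by omega] at this
      have hgap_t1 : gap j t1 = g2 := by rw [hprof j, hgap_t2]
      have hK'_mem : j ∈ σ (t1 + 1 + g2) := by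
        have := hgap_mem j t1
        rwa [hgap_t1] at this
      have hg2p : g2 < p j := by
        have := hgap_lt j (t1 + ℓ)
        rw [hgap_t2] at this
        exact this
      have hmod' : (t1 + 1 + g2) % ℓ = (t + 1 + g) % ℓ := by
        rw [← hmodk]
        have : t1 + 1 + g2 + ℓ = K := by omega
        calc (t1 + 1 + g2) % ℓ = (t1 + 1 + g2 + ℓ) % ℓ := (Nat.add_mod_right _ _).symm
          _ = K % ℓ := by rw [this]
      have h2 : ρ (t + 1 + g) = t1 + 1 + g2 := by
        apply hρ_eq _ _ (by omega) (by have := hpℓ j; omega) hmod'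
      show j ∈ σ (ρ (t + 1 + g))
      rw [h2]
      exact hK'_mem


section TourCost
variable {X : Type*} [DecidableEq X] (d : X → X → ℝ) (s : X)

lemma le_tourCost {S : Finset X} (hS : S ≠ ∅) (c : ℝ)
    (h : ∀ l : List X, l.Nodup → l.toFinset = S → c ≤ routeLen d s l) :
    c ≤ tourCost d s S := by
  rw [tourCost, if_neg hS]
  apply le_csInf
  · exact ⟨routeLen d s S.toList, S.toList, S.nodup_toList, Finset.toList_toFinset S, rfl⟩
  · rintro x ⟨l, h1, h2, rfl⟩
    exact h l h1 h2

lemma tourCost_le (hd : ∀ a b, 0 ≤ d a b) {S : Finset X} (l : List X)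
    (h1 : l.Nodup) (h2 : l.toFinset = S) (hS : S ≠ ∅) :
    tourCost d s S ≤ routeLen d s l := by
  rw [tourCost, if_neg hS]
  apply csInf_le
  · refine ⟨0, ?_⟩
    rintro x ⟨m, -, -, rfl⟩
    rw [routeLen_eq_pathSum]
    exact pathSum_nonneg d hd _
  · exact ⟨l, h1, h2, rfl⟩

end TourCost

end Red

/-- The RFTT instance on the reduction graph (with depot `s` and shortest-path metric)
admits a feasible periodic schedule of average tour cost at most 6 if and only if
there is a pinwheel schedule for the periods `p_1, …, p_n`. -/
theorem redGraph_minAvg_iff_pinwheel (n : ℕ) (p : Fin n → ℕ)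
    (hp : ∀ j : Fin n, 1 ≤ p j) :
    (∃ (J : ℕ → Finset (RedVtx n)) (ℓ : ℕ), 1 ≤ ℓ ∧ (∀ k : ℕ, J (k + ℓ) = J k) ∧
      (∀ v : RedVtx n, v ≠ Sum.inl 0 → ∀ t : ℕ,
        ∃ k : ℕ, t < k ∧ k ≤ t + redTau p v ∧ v ∈ J k) ∧
      (∑ k ∈ Finset.Icc 1 ℓ,
        tourCost (fun u v => ((redGraph n).dist u v : ℝ)) (Sum.inl 0) (J k)) / (ℓ : ℝ)
        ≤ 6) ↔
    (∃ σ : ℕ → Finset (Fin n), (∀ k : ℕ, (σ k).card ≤ 1) ∧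
      ∀ j : Fin n, ∀ t : ℕ, ∃ k : ℕ, t < k ∧ k ≤ t + p j ∧ j ∈ σ k) := by
  set d : RedVtx n → RedVtx n → ℝ := fun u v => ((redGraph n).dist u v : ℝ) with hd
  have hdnn : ∀ a b, 0 ≤ d a b := fun a b => Nat.cast_nonneg _
  have hdc : ∀ a b, d a b = d b a := by
    intro a b
    simp only [hd]
    rw [SimpleGraph.dist_comm]
  constructor
  · rintro ⟨J, ℓ, hℓ, hper, hfeas, havg⟩
    rcases Nat.eq_zero_or_pos n with hn | hn
    · refine ⟨fun _ => ∅, fun k => by simp, fun j => ?_⟩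
      exact absurd j.isLt (by omega)
    · have hconn := Red.connected hn
      have htri : ∀ a b c, d a c ≤ d a b + d b c := by
        intro a b c
        have := hconn.dist_triangle (u := a) (v := b) (w := c)
        simp only [hd]
        exact_mod_cast this
      have hw : ∀ k, 1 ≤ k → (Sum.inl 2 : RedVtx n) ∈ J k := by
        intro k hk
        obtain ⟨k', h1, h2, h3⟩ := hfeas (Sum.inl 2) (by simp) (k - 1)
        simp only [redTau] at h2
        have : k' = k := by omega
        rwa [← this]
      have hw2 : ∀ k, 1 ≤ k → (Sum.inl 3 : RedVtx n) ∈ J k := by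
        intro k hk
        obtain ⟨k', h1, h2, h3⟩ := hfeas (Sum.inl 3) (by simp) (k - 1)
        simp only [redTau] at h2
        have : k' = k := by omega
        rwa [← this]
      have hsw : (3 : ℝ) ≤ d (Sum.inl 0) (Sum.inl 2) := by
        simp only [hd]; exact_mod_cast Red.dist_s_w hn
      have hday : ∀ k ∈ Finset.Icc 1 ℓ, (6 : ℝ) ≤ tourCost d (Sum.inl 0) (J k) := by
        intro k hk
        rw [Finset.mem_Icc] at hk
        apply Red.le_tourCost d _ (Finset.ne_empty_of_mem (hw k hk.1))
        intro l hnd hto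
        rw [Red.routeLen_eq_pathSum]
        have hCl : (Sum.inl 2 : RedVtx n) ∈ l := by
          rw [← List.mem_toFinset, hto]; exact hw k hk.1
        exact Red.six_le_pathSum d htri l hCl hsw (by rw [hdc]; exact hsw)
      have hsum : (∑ k ∈ Finset.Icc 1 ℓ, tourCost d (Sum.inl 0) (J k)) ≤ 6 * ℓ := by
        have hpos : (0 : ℝ) < ℓ := by exact_mod_cast hℓ
        rw [div_le_iff₀ hpos] at havg
        linarith
      have hJrep : ∀ m, 1 ≤ m → ∃ k, 1 ≤ k ∧ k ≤ ℓ ∧ J m = J k := by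
        intro m
        induction m using Nat.strong_induction_on with
        | _ m ih =>
          intro hm
          by_cases hcase : m ≤ ℓ
          · exact ⟨m, hm, hcase, rfl⟩
          · have hrec : J (m - ℓ + ℓ) = J (m - ℓ) := hper (m - ℓ)
            rw [show m - ℓ + ℓ = m by omega] at hrec
            obtain ⟨k, h1, h2, h3⟩ := ih (m - ℓ) (by omega) (by omega)
            exact ⟨k, h1, h2, hrec.trans h3⟩
      have hcard : ∀ m, 1 ≤ m →
          (Finset.univ.filter
            (fun j : Fin n => (Sum.inr (j, 0) : RedVtx n) ∈ J m)).card ≤ 1 := by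
        intro m hm
        by_contra hcon
        push_neg at hcon
        obtain ⟨j, hj, j', hj', hjj⟩ := Finset.one_lt_card.mp hcon
        simp only [Finset.mem_filter] at hj hj'
        obtain ⟨k, hk1, hk2, hJk⟩ := hJrep m hm
        have hbad : (8 : ℝ) ≤ tourCost d (Sum.inl 0) (J k) := by
          apply Red.le_tourCost d _ (Finset.ne_empty_of_mem (hw k hk1))
          intro l hnd hto
          rw [Red.routeLen_eq_pathSum]
          set T : Finset (RedVtx n) :=
            {Sum.inr (j, 0), Sum.inr (j', 0), Sum.inl 2, Sum.inl 3} with hT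
          have hTsub : T ⊆ J k := by
            intro x hx
            simp only [hT, Finset.mem_insert, Finset.mem_singleton] at hx
            rcases hx with rfl | rfl | rfl | rfl
            · rw [← hJk]; exact hj.2
            · rw [← hJk]; exact hj'.2
            · exact hw k hk1
            · exact hw2 k hk1
          set l' := l.filter (fun x => x ∈ T) with hl'
          have hsub : List.Sublist l' l := List.filter_sublist
          have hnd' : l'.Nodup := hsub.nodup hnd
          have hto' : l'.toFinset = T := by
            ext x
            simp only [hl', List.mem_toFinset, List.mem_filter, decide_eq_true_eq]
            constructor
            · exact fun h => h.2
            · intro h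
              exact ⟨by rw [← List.mem_toFinset, hto]; exact hTsub h, h⟩
          have h8 : 8 ≤ Red.pathSum d (Sum.inl 0 :: l' ++ [Sum.inl 0]) := by
            apply Red.eight_le_pathSum d htri l' hnd' hto'
            · simp only [ne_eq, Sum.inr.injEq, Prod.mk.injEq, and_true]
              exact hjj
            · simp
            · simp
            · simp
            · simp
            · simp
            · simp only [hd]; exact_mod_cast Red.dist_s_v hn j 0
            · simp only [hd]; exact_mod_cast Red.dist_s_v hn j' 0
            · exact hsw
            · simp only [hd]; exact_mod_cast Red.dist_s_w2 hn
            · rw [hdc]; simp only [hd]; exact_mod_cast Red.dist_s_v hn j 0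
            · rw [hdc]; simp only [hd]; exact_mod_cast Red.dist_s_v hn j' 0
            · rw [hdc]; exact hsw
            · rw [hdc]; simp only [hd]; exact_mod_cast Red.dist_s_w2 hn
            · simp only [hd]; exact_mod_cast Red.dist_vv hn hjj
            · rw [hdc]; simp only [hd]; exact_mod_cast Red.dist_vv hn hjj
            · simp only [hd]; exact_mod_cast Red.dist_v_w hn j 0
            · rw [hdc]; simp only [hd]; exact_mod_cast Red.dist_v_w hn j 0
            · simp only [hd]; exact_mod_cast Red.dist_v_w hn j' 0
            · rw [hdc]; simp only [hd]; exact_mod_cast Red.dist_v_w hn j' 0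
            · simp only [hd]; exact_mod_cast Red.dist_v_w2 hn j
            · rw [hdc]; simp only [hd]; exact_mod_cast Red.dist_v_w2 hn j
            · simp only [hd]; exact_mod_cast Red.dist_v_w2 hn j'
            · rw [hdc]; simp only [hd]; exact_mod_cast Red.dist_v_w2 hn j'
            · simp only [hd]; exact_mod_cast Red.dist_w_w2 hn
            · rw [hdc]; simp only [hd]; exact_mod_cast Red.dist_w_w2 hn
          calc (8 : ℝ) ≤ Red.pathSum d (Sum.inl 0 :: l' ++ [Sum.inl 0]) := h8
            _ ≤ Red.pathSum d (Sum.inl 0 :: l ++ [Sum.inl 0]) :=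
                Red.Sublist.pathSum_le d htri _ hsub _
        have hlt : 6 * (ℓ : ℝ) < ∑ k ∈ Finset.Icc 1 ℓ, tourCost d (Sum.inl 0) (J k) := by
          have h1 : ∑ _k ∈ Finset.Icc 1 ℓ, (6 : ℝ) <
              ∑ k ∈ Finset.Icc 1 ℓ, tourCost d (Sum.inl 0) (J k) := by
            apply Finset.sum_lt_sum hday
            exact ⟨k, Finset.mem_Icc.mpr ⟨hk1, hk2⟩, by linarith⟩
          rw [Finset.sum_const, Nat.card_Icc] at h1
          simp only [Nat.add_sub_cancel, nsmul_eq_mul] at h1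
          linarith
        linarith
      refine ⟨fun k => if k = 0 then ∅
        else Finset.univ.filter (fun j : Fin n => (Sum.inr (j, 0) : RedVtx n) ∈ J k),
        ?_, ?_⟩
      · intro k
        beta_reduce
        rcases Nat.eq_zero_or_pos k with rfl | hk
        · simp
        · rw [if_neg (by omega)]
          exact hcard k hk
      · intro j t
        obtain ⟨k, h1, h2, h3⟩ := hfeas (Sum.inr (j, 0)) (by simp) t
        simp only [redTau] at h2
        refine ⟨k, h1, h2, ?_⟩
        beta_reduce
        rw [if_neg (by omega)]
        simp only [Finset.mem_filter, Finset.mem_univ, true_and]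
        exact h3
  · rintro ⟨σ, hσcard, hσcov⟩
    rcases Nat.eq_zero_or_pos n with hn | hn
    · -- n = 0 : the trivial schedule {w¹, w, w²}
      refine ⟨fun _ => {Sum.inl 1, Sum.inl 2, Sum.inl 3}, 1, le_refl 1, fun k => rfl,
        ?_, ?_⟩
      · intro v hv t
        refine ⟨t + 1, by omega, ?_, ?_⟩
        · cases v with
          | inl a => simp [redTau]
          | inr q => exact absurd q.1.isLt (by omega)
        · cases v with
          | inl a =>
              fin_cases a
              · exact absurd rfl hv
              · simp
              · simp
              · simp
          | inr q => exact absurd q.1.isLt (by omega)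
      · -- cost for n = 0
        have hiso : ∀ y : RedVtx n, ¬ (redGraph n).Adj (Sum.inl 0) y := by
          intro y h
          rw [redGraph, SimpleGraph.fromRel_adj] at h
          obtain ⟨hne, h | h⟩ := h
          · rcases h with ⟨-, jj, -, -⟩ | ⟨jj, -, -⟩ | ⟨jj, -, -⟩ | ⟨he, -⟩
            · exact absurd jj.isLt (by omega)
            · exact absurd jj.isLt (by omega)
            · exact absurd jj.isLt (by omega)
            · exact absurd (Sum.inl.inj he) (by decide)
          · rcases h with ⟨-, jj, -, -⟩ | ⟨jj, -, -⟩ | ⟨jj, -, -⟩ | ⟨-, he | he⟩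
            · exact absurd jj.isLt (by omega)
            · exact absurd jj.isLt (by omega)
            · exact absurd jj.isLt (by omega)
            · exact absurd (Sum.inl.inj he) (by decide)
            · exact absurd (Sum.inl.inj he) (by decide)
        have hnr : ∀ y : RedVtx n, y ≠ Sum.inl 0 → ¬ (redGraph n).Reachable (Sum.inl 0) y := by
          intro y hy hr
          obtain ⟨w⟩ := hr
          cases w with
          | nil => exact hy rfl
          | cons h q => exact hiso _ h
        have hz1 : d (Sum.inl 0) (Sum.inl 1) = 0 := by
          simp only [hd]
          rw [SimpleGraph.dist_eq_zero_of_not_reachable (hnr _ (by simp))]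
          simp
        have hz2 : d (Sum.inl 3) (Sum.inl 0) = 0 := by
          rw [hdc]
          simp only [hd]
          rw [SimpleGraph.dist_eq_zero_of_not_reachable (hnr _ (by simp))]
          simp
        have h12 : d (Sum.inl 1) (Sum.inl 2) ≤ 1 := by
          simp only [hd]
          exact_mod_cast Red.dist_le_one_of_adj Red.adj_w_w1.symm
        have h23 : d (Sum.inl 2) (Sum.inl 3) ≤ 1 := by
          simp only [hd]
          exact_mod_cast Red.dist_le_one_of_adj Red.adj_w_w2
        have hcost : tourCost d (Sum.inl 0) {Sum.inl 1, Sum.inl 2, Sum.inl 3} ≤ 6 := by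
          have hle := Red.tourCost_le d (Sum.inl 0) hdnn
            (S := {Sum.inl 1, Sum.inl 2, Sum.inl 3})
            [Sum.inl 1, Sum.inl 2, Sum.inl 3] (by simp) (by simp) (by simp)
          rw [Red.routeLen_eq_pathSum] at hle
          simp only [List.cons_append, List.nil_append, Red.pathSum] at hle
          linarith
        simp only [Finset.Icc_self, Finset.sum_singleton]
        rw [Nat.cast_one, div_one]
        exact hcost
    · -- n ≥ 1
      obtain ⟨σ', ℓ, hℓ1, hper, hcard, hcov⟩ :=
        Red.exists_periodic_pinwheel p hp σ hσcard hσcov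
      refine ⟨fun k => {Sum.inl 1, Sum.inl 2, Sum.inl 3}
          ∪ (σ' k).image (fun j => (Sum.inr (j, 0) : RedVtx n))
          ∪ (σ' k).image (fun j => (Sum.inr (j, 1) : RedVtx n)), ℓ, hℓ1,
        ?_, ?_, ?_⟩
      · intro k
        simp only [hper]
      · intro v hv t
        cases v with
        | inl a =>
            refine ⟨t + 1, by omega, by simp [redTau], ?_⟩
            fin_cases a
            · exact absurd rfl hv
            · simp
            · simp
            · simp
        | inr q =>
            obtain ⟨j, i⟩ := q
            obtain ⟨k, h1, h2, h3⟩ := hcov j t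
            refine ⟨k, h1, by simpa [redTau] using h2, ?_⟩
            simp only [Finset.mem_union, Finset.mem_image]
            fin_cases i
            · exact Or.inl (Or.inr ⟨j, h3, rfl⟩)
            · exact Or.inr ⟨j, h3, rfl⟩
      · -- cost bound
        have hone : ∀ {x y : RedVtx n}, (redGraph n).Adj x y → d x y ≤ 1 := by
          intro x y h
          simp only [hd]
          exact_mod_cast Red.dist_le_one_of_adj h
        have hcost : ∀ k, tourCost d (Sum.inl 0)
            ({Sum.inl 1, Sum.inl 2, Sum.inl 3}
              ∪ (σ' k).image (fun j => (Sum.inr (j, 0) : RedVtx n))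
              ∪ (σ' k).image (fun j => (Sum.inr (j, 1) : RedVtx n))) ≤ 6 := by
          intro k
          rcases Finset.eq_empty_or_nonempty (σ' k) with hemp | ⟨j, hj⟩
          · rw [hemp]
            simp only [Finset.image_empty, Finset.union_empty]
            have hle := Red.tourCost_le d (Sum.inl 0) hdnn
              (S := {Sum.inl 1, Sum.inl 2, Sum.inl 3})
              [Sum.inl 1, Sum.inl 2, Sum.inl 3] (by simp) (by simp) (by simp)
            rw [Red.routeLen_eq_pathSum] at hle
            simp only [List.cons_append, List.nil_append, Red.pathSum] at hle
            have b1 : d (Sum.inl 0) (Sum.inl 1) ≤ 2 := by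
              simp only [hd]; exact_mod_cast Red.dist_s_w1_le hn
            have b2 : d (Sum.inl 1) (Sum.inl 2) ≤ 1 := hone Red.adj_w_w1.symm
            have b3 : d (Sum.inl 2) (Sum.inl 3) ≤ 1 := hone Red.adj_w_w2
            have b4 : d (Sum.inl 3) (Sum.inl 0) ≤ 2 := by
              simp only [hd]; exact_mod_cast Red.dist_w2_s_le hn
            linarith
          · have hsing : σ' k = {j} := by
              apply Finset.eq_singleton_iff_unique_mem.mpr
              exact ⟨hj, fun x hx => Finset.card_le_one.mp (hcard k) x hx j hj⟩
            rw [hsing]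
            have hle := Red.tourCost_le d (Sum.inl 0) hdnn
              (S := {Sum.inl 1, Sum.inl 2, Sum.inl 3}
                ∪ ({j} : Finset (Fin n)).image (fun j => (Sum.inr (j, 0) : RedVtx n))
                ∪ ({j} : Finset (Fin n)).image (fun j => (Sum.inr (j, 1) : RedVtx n)))
              [Sum.inr (j, 0), Sum.inl 1, Sum.inl 2, Sum.inl 3, Sum.inr (j, 1)]
              (by simp) (by ext x; simp; tauto) (by simp)
            rw [Red.routeLen_eq_pathSum] at hle
            simp only [List.cons_append, List.nil_append, Red.pathSum] at hle
            have b1 : d (Sum.inl 0) (Sum.inr (j, 0)) ≤ 1 := hone (Red.adj_s_v j 0)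
            have b2 : d (Sum.inr (j, 0)) (Sum.inl 1) ≤ 1 := hone (Red.adj_w1_v j).symm
            have b3 : d (Sum.inl 1) (Sum.inl 2) ≤ 1 := hone Red.adj_w_w1.symm
            have b4 : d (Sum.inl 2) (Sum.inl 3) ≤ 1 := hone Red.adj_w_w2
            have b5 : d (Sum.inl 3) (Sum.inr (j, 1)) ≤ 1 := hone (Red.adj_w2_v j)
            have b6 : d (Sum.inr (j, 1)) (Sum.inl 0) ≤ 1 := hone (Red.adj_s_v j 1).symm
            linarith
        have hpos : (0 : ℝ) < ℓ := by exact_mod_cast hℓ1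
        rw [div_le_iff₀ hpos]
        calc (∑ k ∈ Finset.Icc 1 ℓ, tourCost d (Sum.inl 0) _)
            ≤ ∑ _k ∈ Finset.Icc 1 ℓ, (6 : ℝ) :=
              Finset.sum_le_sum (fun k _ => hcost k)
          _ = 6 * ℓ := by
              rw [Finset.sum_const, Nat.card_Icc]
              simp only [Nat.add_sub_cancel, nsmul_eq_mul]
              ring
end
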